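/- arXiv:2210.03236 — 8 statements merged into one kernel-verified Lean document; each statement's English description precedes it below -/
import Mathlib

section
/- Let q be a prime power, n ≥ 2, and let U ⊊ F_{q^n} be an F_q-linear subspace of dimension d_U ≥ 1. If U contains a nonzero square of F_{q^n} (i.e., a² ∈ U for some a ≠ 0), then ω(G_U) ≥ q + min{1, d_U − 1}. -/
/-- The Paley-like graph on a field `F` associated to a subset `S ⊆ F`:
distinct vertices `a, b ∈ F` are adjacent if and only if `a * b ∈ S`.
For an `F_q`-subspace `U`, the graph `G_U` of the paper is `paleyGraph (U : Set F)`. -/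
def paleyGraph {F : Type*} [Field F] (S : Set F) : SimpleGraph F where
  Adj a b := a ≠ b ∧ a * b ∈ S
  symm := ⟨fun a b h => ⟨h.1.symm, mul_comm a b ▸ h.2⟩⟩
  loopless := ⟨fun a h => h.1 rfl⟩

/-- if `U` contains a nonzero square of `F_{q^n}`, then
`ω(G_U) ≥ q + min {1, d_U - 1}`. -/
theorem omega_lower_bound_of_nonzero_square (q n : ℕ) (hq : IsPrimePow q) (hn : 2 ≤ n)
    (K F : Type*) [Field K] [Field F] [Algebra K F] [Fintype K] [Fintype F]
    (hK : Fintype.card K = q) (hF : Fintype.card F = q ^ n)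
    (U : Submodule K F) (hU : U ≠ ⊤) (hd : 1 ≤ Module.finrank K U)
    (hsq : ∃ a : F, a ≠ 0 ∧ a ^ 2 ∈ U) :
    q + min 1 (Module.finrank K U - 1) ≤ (paleyGraph (U : Set F)).cliqueNum := by
  classical
  obtain ⟨a, ha, ha2⟩ := hsq
  have halg : Function.Injective (algebraMap K F) := (algebraMap K F).injective
  -- the base clique: a • K
  set f : K → F := fun c => algebraMap K F c * a with hf
  have hfinj : Function.Injective f := fun x y h => by
    apply halg; exact mul_right_cancel₀ ha h
  set s : Finset F := Finset.image f Finset.univ with hs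
  have hcard : s.card = q := by
    rw [hs, Finset.card_image_of_injective _ hfinj, Finset.card_univ, hK]
  have hmem : ∀ x ∈ s, ∃ c : K, x = algebraMap K F c * a := by
    intro x hx
    simp only [hs, Finset.mem_image] at hx
    obtain ⟨c, _, hc⟩ := hx
    exact ⟨c, hc.symm⟩
  have hclique : (paleyGraph (U : Set F)).IsClique (s : Set F) := by
    intro x hx y hy hxy
    obtain ⟨c, rfl⟩ := hmem x hx
    obtain ⟨c', rfl⟩ := hmem y hy
    refine ⟨hxy, ?_⟩
    have : algebraMap K F c * a * (algebraMap K F c' * a) = (c * c') • a ^ 2 := by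
      rw [Algebra.smul_def, map_mul]; ring
    rw [this]
    exact U.smul_mem _ ha2
  rcases Nat.lt_or_ge (Module.finrank K U) 2 with h2 | h2
  · -- d = 1 case: min 1 (d-1) = 0
    have : Module.finrank K U = 1 := le_antisymm (by omega) hd
    rw [this]
    simp only [Nat.sub_self, min_eq_right (Nat.zero_le 1), add_zero]
    calc q = s.card := hcard.symm
    _ ≤ _ := SimpleGraph.IsClique.card_le_cliqueNum (tc := hclique)
  · -- d ≥ 2 case
    have hmin : min 1 (Module.finrank K U - 1) = 1 := by omega
    rw [hmin]
    -- W = {b | a * b ∈ U}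
    set W : Submodule K F := U.comap (LinearMap.mulLeft K a) with hW
    have hWd : Module.finrank K W = Module.finrank K U := by
      have e : W ≃ₗ[K] U := by
        refine LinearEquiv.ofBijective ((LinearMap.mulLeft K a).restrict
          (fun x hx => hx : ∀ x ∈ W, a * x ∈ U)) ⟨?_, ?_⟩
        · intro x y hxy
          have := Subtype.ext_iff.mp hxy
          simp only [LinearMap.restrict_apply, LinearMap.mulLeft_apply] at this
          exact Subtype.ext (mul_left_cancel₀ ha this)
        · rintro ⟨u, hu⟩
          refine ⟨⟨a⁻¹ * u, ?_⟩, ?_⟩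
          · show a * (a⁻¹ * u) ∈ U
            rw [← mul_assoc, mul_inv_cancel₀ ha, one_mul]; exact hu
          · apply Subtype.ext
            simp only [LinearMap.restrict_apply, LinearMap.mulLeft_apply]
            rw [← mul_assoc, mul_inv_cancel₀ ha, one_mul]
      exact e.finrank_eq
    have haW : a ∈ W := by
      show a * a ∈ U
      rw [← sq]; exact ha2
    have hspan : Submodule.span K {a} ≤ W := by
      rw [Submodule.span_le, Set.singleton_subset_iff]; exact haW
    have hnotle : ¬ (W ≤ Submodule.span K {a}) := by
      intro hle
      have := Submodule.finrank_mono hle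
      rw [hWd, finrank_span_singleton ha] at this
      omega
    obtain ⟨b, hbW, hbs⟩ := SetLike.not_le_iff_exists.mp hnotle
    have hbns : b ∉ s := by
      intro hb
      obtain ⟨c, rfl⟩ := hmem b hb
      apply hbs
      rw [Submodule.mem_span_singleton]
      exact ⟨c, Algebra.smul_def c a⟩
    have hclique2 : (paleyGraph (U : Set F)).IsClique (insert b (s : Set F)) := by
      apply SimpleGraph.IsClique.insert hclique
      intro x hx hxb
      obtain ⟨c, rfl⟩ := hmem x hx
      refine ⟨hxb, ?_⟩
      have : b * (algebraMap K F c * a) = c • (a * b) := by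
        rw [Algebra.smul_def]; ring
      rw [this]
      exact U.smul_mem _ hbW
    have : (insert b s).card = q + 1 := by
      rw [Finset.card_insert_of_notMem hbns, hcard]
    calc q + 1 = (insert b s).card := this.symm
    _ ≤ _ := by
        have := SimpleGraph.IsClique.card_le_cliqueNum
          (G := paleyGraph (U : Set F)) (t := insert b s) (tc := by
            simpa using hclique2)
        exact this
end

section
/- Let q be a prime power, n ≥ 2, and let U ⊊ F_{q^n} be an F_q-linear subspace of dimension d_U = 1. If q ∈ {2, 3}, then ω(G_U) = 3. If q > 3, then ω(G_U) = q if U contains a nonzero square of F_{q^n}, and ω(G_U) = 3 otherwise. -/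
lemma cliqueNum_eq_of_aux {α : Type*} [Fintype α] (G : SimpleGraph α) (m : ℕ)
    (h1 : ∃ s : Finset α, G.IsNClique m s)
    (h2 : ∀ t : Finset α, G.IsClique ↑t → t.card ≤ m) : G.cliqueNum = m := by
  obtain ⟨s, hs⟩ := G.exists_isNClique_cliqueNum
  obtain ⟨t, ht⟩ := h1
  refine le_antisymm ?_ ?_
  · rw [← hs.card_eq]; exact h2 s hs.isClique
  · rw [← ht.card_eq]; exact ht.isClique.card_le_cliqueNum

/-- for `d_U = 1`: if `q ∈ {2, 3}` then `ω(G_U) = 3`; if `q > 3` then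
`ω(G_U) = q` when `U` contains a nonzero square of `F_{q^n}`, and `ω(G_U) = 3`
otherwise. -/
theorem omega_dim_one (q n : ℕ) (hq : IsPrimePow q) (hn : 2 ≤ n)
    (K F : Type*) [Field K] [Field F] [Algebra K F] [Fintype K] [Fintype F]
    (hK : Fintype.card K = q) (hF : Fintype.card F = q ^ n)
    (U : Submodule K F) (hU : U ≠ ⊤) (hd : Module.finrank K U = 1) :
    (q = 2 ∨ q = 3 → (paleyGraph (U : Set F)).cliqueNum = 3) ∧
    (3 < q →
      ((∃ a : F, a ≠ 0 ∧ a ^ 2 ∈ U) → (paleyGraph (U : Set F)).cliqueNum = q) ∧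
      (¬(∃ a : F, a ≠ 0 ∧ a ^ 2 ∈ U) → (paleyGraph (U : Set F)).cliqueNum = 3)) := by
  classical
  set e := algebraMap K F with he
  have heinj : Function.Injective e := (algebraMap K F).injective
  have hq2 : 2 ≤ q := hq.two_le
  have hcardF : 4 ≤ Fintype.card F := by
    rw [hF]
    calc (4 : ℕ) = 2 ^ 2 := rfl
      _ ≤ q ^ 2 := Nat.pow_le_pow_left hq2 2
      _ ≤ q ^ n := Nat.pow_le_pow_right (le_trans one_le_two hq2) hn
  -- a generator u of U
  have hnt : Nontrivial U := by
    refine Module.nontrivial_of_finrank_pos (R := K) ?_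
    rw [hd]; norm_num
  obtain ⟨u0, hu00⟩ := exists_ne (0 : U)
  set u : F := (u0 : F) with hudef
  have hu0 : u ≠ 0 := by
    simpa [hudef, Submodule.coe_eq_zero] using hu00
  have huU : u ∈ U := u0.2
  have hmem : ∀ x : F, x ∈ U → ∃ c : K, e c * u = x := by
    intro x hx
    obtain ⟨c, hc⟩ := exists_smul_eq_of_finrank_eq_one hd hu00 ⟨x, hx⟩
    refine ⟨c, ?_⟩
    have := congrArg (Subtype.val) hc
    simpa [Algebra.smul_def] using this
  have hmem' : ∀ c : K, e c * u ∈ U := by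
    intro c
    simpa [Algebra.smul_def] using U.smul_mem c huU
  -- triangle existence
  have htri : ∃ s : Finset F, (paleyGraph (U : Set F)).IsNClique 3 s := by
    have hex : ∃ a : F, a ≠ 0 ∧ a * a ≠ u := by
      by_cases h1 : (1 : F) * 1 = u
      · have hu1 : u = 1 := by simpa using h1.symm
        have h3 : ({0, 1, -1} : Finset F).card ≤ 3 := by
          refine (Finset.card_insert_le _ _).trans ?_
          refine Nat.succ_le_succ ?_
          exact (Finset.card_insert_le _ _).trans (by simp)
        have ⟨a, ha⟩ : ∃ a : F, a ∉ ({0, 1, -1} : Finset F) := by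
          by_contra hno
          push_neg at hno
          have hsub : Finset.univ ⊆ ({0, 1, -1} : Finset F) := fun x _ => hno x
          have := Finset.card_le_card hsub
          rw [Finset.card_univ] at this
          omega
        simp only [Finset.mem_insert, Finset.mem_singleton, not_or] at ha
        obtain ⟨h0, hp1, hm1⟩ := ha
        refine ⟨a, h0, ?_⟩
        rw [hu1]
        intro hc
        rcases mul_self_eq_one_iff.mp hc with h | h
        · exact hp1 h
        · exact hm1 h
      · exact ⟨1, one_ne_zero, h1⟩
    obtain ⟨a, ha0, ha2⟩ := hex
    have hb0 : u * a⁻¹ ≠ 0 := mul_ne_zero hu0 (inv_ne_zero ha0)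
    have hab : a * (u * a⁻¹) = u := by field_simp
    have hne : a ≠ u * a⁻¹ := by
      intro h
      apply ha2
      calc a * a = a * (u * a⁻¹) := by rw [← h]
        _ = u := hab
    refine ⟨{0, a, u * a⁻¹}, ?_, ?_⟩
    · intro x hx y hy hxy
      refine ⟨hxy, ?_⟩
      simp only [Finset.coe_insert, Set.mem_insert_iff, Finset.coe_singleton,
        Set.mem_singleton_iff] at hx hy
      rcases hx with rfl | rfl | rfl <;> rcases hy with rfl | rfl | rfl <;>
        first
          | exact absurd rfl hxy
          | simpa using U.zero_mem
          | (rw [hab]; exact huU)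
          | (rw [mul_comm, hab]; exact huU)
    · rw [Finset.card_insert_of_notMem (by simp [ha0.symm, hb0.symm]),
        Finset.card_insert_of_notMem (by simpa using hne), Finset.card_singleton]
  -- q-clique when a nonzero square is in U
  have hqcl : ∀ a : F, a ≠ 0 → a ^ 2 ∈ U →
      ∃ s : Finset F, (paleyGraph (U : Set F)).IsNClique q s := by
    intro a ha0 ha2
    refine ⟨Finset.image (fun c : K => e c * a) Finset.univ, ?_, ?_⟩
    · intro x hx y hy hxy
      simp only [Finset.coe_image, Set.mem_image] at hx hy
      obtain ⟨c, -, rfl⟩ := hx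
      obtain ⟨c', -, rfl⟩ := hy
      refine ⟨hxy, ?_⟩
      have hcc : (e c * a) * (e c' * a) = e (c * c') * a ^ 2 := by
        rw [map_mul]; ring
      rw [hcc]
      exact SetLike.mem_coe.mpr (by simpa [Algebra.smul_def] using U.smul_mem (c * c') ha2)
    · rw [Finset.card_image_of_injective _ ?_, Finset.card_univ, hK]
      intro c c' hcc
      exact heinj (mul_right_cancel₀ ha0 hcc)
  -- upper bound
  have hbound : ∀ t : Finset F, (paleyGraph (U : Set F)).IsClique ↑t →
      t.card ≤ 3 ∨ ((∃ a : F, a ≠ 0 ∧ a ^ 2 ∈ U) ∧ t.card ≤ q) := by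
    intro t ht
    by_cases h3 : t.card ≤ 3
    · exact Or.inl h3
    right
    push_neg at h3
    have h3' : 2 < (t.erase 0).card := by
      by_cases h0 : (0 : F) ∈ t
      · rw [Finset.card_erase_of_mem h0]; omega
      · rw [Finset.erase_eq_of_notMem h0]; omega
    obtain ⟨a, b, c, haT, hbT, hcT, hab, hac, hbc⟩ := Finset.two_lt_card_iff.mp h3'
    have ha0 : a ≠ 0 := (Finset.mem_erase.mp haT).1
    have hb0 : b ≠ 0 := (Finset.mem_erase.mp hbT).1
    have hc0 : c ≠ 0 := (Finset.mem_erase.mp hcT).1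
    have haT' : a ∈ t := (Finset.mem_erase.mp haT).2
    have hbT' : b ∈ t := (Finset.mem_erase.mp hbT).2
    have hcT' : c ∈ t := (Finset.mem_erase.mp hcT).2
    obtain ⟨α, hα⟩ := hmem _ (ht (Finset.mem_coe.mpr haT') (Finset.mem_coe.mpr hbT') hab).2
    obtain ⟨β, hβ⟩ := hmem _ (ht (Finset.mem_coe.mpr haT') (Finset.mem_coe.mpr hcT') hac).2
    obtain ⟨γ, hγ⟩ := hmem _ (ht (Finset.mem_coe.mpr hbT') (Finset.mem_coe.mpr hcT') hbc).2
    have hγ0 : e γ ≠ 0 := by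
      intro h
      apply mul_ne_zero hb0 hc0
      rw [← hγ, h, zero_mul]
    set ε : K := α * β * γ⁻¹ with hε
    have ha2eq : a ^ 2 = e ε * u := by
      have h1 : a ^ 2 = (a * b) * (a * c) / (b * c) := by
        field_simp
      rw [h1, ← hα, ← hβ, ← hγ, hε, map_mul, map_mul, map_inv₀]
      field_simp
    have haU2 : a ^ 2 ∈ U := by rw [ha2eq]; exact hmem' ε
    have hε0 : e ε ≠ 0 := by
      intro h
      apply pow_ne_zero 2 ha0
      rw [ha2eq, h, zero_mul]
    refine ⟨⟨a, ha0, haU2⟩, ?_⟩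
    have hsub : t ⊆ Finset.image (fun c : K => e c * a) Finset.univ := by
      intro x hx
      rw [Finset.mem_image]
      by_cases hx0 : x = 0
      · exact ⟨0, Finset.mem_univ _, by simp [hx0]⟩
      by_cases hxa : x = a
      · exact ⟨1, Finset.mem_univ _, by simp [hxa]⟩
      obtain ⟨δ, hδ⟩ := hmem _ (ht (Finset.mem_coe.mpr hx) (Finset.mem_coe.mpr haT') hxa).2
      refine ⟨δ * ε⁻¹, Finset.mem_univ _, ?_⟩
      have hu_eq : u = (e ε)⁻¹ * (a * a) := by
        have : a * a = e ε * u := by rw [← ha2eq]; ring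
        rw [this]
        field_simp
      apply mul_right_cancel₀ ha0
      rw [map_mul, map_inv₀, ← hδ, hu_eq]
      ring
    calc t.card ≤ _ := Finset.card_le_card hsub
      _ ≤ Finset.univ.card := Finset.card_image_le
      _ = q := by rw [Finset.card_univ, hK]
  refine ⟨?_, fun hq3 => ⟨?_, ?_⟩⟩
  · intro hq23
    apply cliqueNum_eq_of_aux _ 3 htri
    intro t ht
    rcases hbound t ht with h | ⟨-, h⟩
    · exact h
    · rcases hq23 with rfl | rfl <;> omega
  · rintro ⟨a, ha0, ha2⟩
    apply cliqueNum_eq_of_aux _ q (hqcl a ha0 ha2)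
    intro t ht
    rcases hbound t ht with h | ⟨-, h⟩
    · omega
    · exact h
  · intro hnsq
    apply cliqueNum_eq_of_aux _ 3 htri
    intro t ht
    rcases hbound t ht with h | ⟨hsq, -⟩
    · exact h
    · exact absurd hsq hnsq
end

section
/- Let q be an even prime power (i.e., F_q has characteristic 2), n ≥ 2, and let B be a nondegenerate symmetric F_q-bilinear form on F_{q^n} (viewed as an n-dimensional F_q-vector space). Let t(B) be the largest dimension of an F_q-subspace W ⊆ F_{q^n} with B(u, w) = 0 for all u, w ∈ W. If q = 2 and t(B) ≤ 2, then every set E ⊆ F_{q^n} such that B(u, w) = 0 for all u, w ∈ E with u ≠ w satisfies |E| ≤ n + 1. -/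
/-- let `q` be an even prime power, `B` a nondegenerate symmetric
`F_q`-bilinear form on `F_{q^n}`, and `t(B)` the largest dimension of a totally
`B`-isotropic `F_q`-subspace. If `q = 2` and `t(B) ≤ 2`, then every pairwise
`B`-orthogonal set `E ⊆ F_{q^n}` satisfies `|E| ≤ n + 1`. -/
theorem pairwise_orthogonal_card_le_char_two_small (q n : ℕ)
    (hq : IsPrimePow q) (hqeven : Even q) (hn : 2 ≤ n)
    (K F : Type*) [Field K] [Field F] [Algebra K F] [Fintype K] [Fintype F]
    (hK : Fintype.card K = q) (hF : Fintype.card F = q ^ n)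
    (B : F →ₗ[K] F →ₗ[K] K)
    (hsymm : ∀ x y : F, B x y = B y x)
    (hnd : ∀ x : F, (∀ y : F, B x y = 0) → x = 0)
    (t : ℕ)
    (ht : IsGreatest {d : ℕ | ∃ W : Submodule K F, Module.finrank K W = d ∧
      ∀ u ∈ W, ∀ w ∈ W, B u w = 0} t)
    (hq2 : q = 2) (ht2 : t ≤ 2)
    (E : Finset F) (hE : ∀ u ∈ E, ∀ w ∈ E, u ≠ w → B u w = 0) :
    E.card ≤ n + 1 := by
  classical
  subst hq2
  have hfd : FiniteDimensional K F := Module.Finite.of_finite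
  have hrefl : B.IsRefl := fun x y h => by rw [hsymm]; exact h
  have hndeg : LinearMap.BilinForm.Nondegenerate B :=
    ⟨hnd, fun y h => hnd y (fun x => by rw [hsymm]; exact h x)⟩
  -- n is the dimension of F over K
  have hcardF : Fintype.card F = Fintype.card K ^ Module.finrank K F :=
    Module.card_eq_pow_finrank (K := K) (V := F)
  have hnrank : Module.finrank K F = n := by
    rw [hK, hF] at hcardF
    exact (Nat.pow_right_injective (le_refl 2) hcardF).symm
  set E0 := E.filter (fun u => B u u = 0) with hE0def
  set E1 := E.filter (fun u => B u u ≠ 0) with hE1def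
  have hsplit : E0.card + E1.card = E.card :=
    Finset.card_filter_add_card_filter_not _
  have hE0mem : ∀ u ∈ E0, u ∈ E ∧ B u u = 0 := fun u hu => Finset.mem_filter.1 hu
  have hE1mem : ∀ u ∈ E1, u ∈ E ∧ B u u ≠ 0 := fun u hu => Finset.mem_filter.1 hu
  set W : Submodule K F := Submodule.span K (E0 : Set F) with hWdef
  set V : Submodule K F := Submodule.span K (E1 : Set F) with hVdef
  -- orthogonality of generators
  have h1 : ∀ i ∈ E0, ∀ j ∈ E0, B i j = 0 := by
    intro i hi j hj
    by_cases hij : i = j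
    · subst hij; exact (hE0mem i hi).2
    · exact hE i (hE0mem i hi).1 j (hE0mem j hj).1 hij
  have h2 : ∀ i ∈ E0, ∀ j ∈ E1, B i j = 0 := by
    intro i hi j hj
    have hij : i ≠ j := by
      intro h; subst h; exact (hE1mem i hj).2 (hE0mem i hi).2
    exact hE i (hE0mem i hi).1 j (hE1mem j hj).1 hij
  -- every generator of W is orthogonal to all of W ⊔ V
  have hgen : ∀ i ∈ E0, ∀ w ∈ W ⊔ V, B i w = 0 := by
    intro i hi
    have hsub : (↑E0 ∪ ↑E1 : Set F) ⊆ ↑(LinearMap.ker (B i)) := by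
      rintro j (hj | hj)
      · exact LinearMap.mem_ker.2 (h1 i hi j hj)
      · exact LinearMap.mem_ker.2 (h2 i hi j hj)
    have hle : W ⊔ V ≤ LinearMap.ker (B i) := by
      rw [hWdef, hVdef, ← Submodule.span_union]
      exact Submodule.span_le.2 hsub
    intro w hw
    exact LinearMap.mem_ker.1 (hle hw)
  -- hence all of W is orthogonal to all of W ⊔ V
  have hWorth : ∀ w ∈ W ⊔ V, ∀ u ∈ W, B u w = 0 := by
    intro w hw u hu
    have hle : W ≤ LinearMap.ker (B.flip w) :=
      Submodule.span_le.2 fun i hi => LinearMap.mem_ker.2 (by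
        simpa using hgen i hi w hw)
    simpa using LinearMap.mem_ker.1 (hle hu)
  -- W is totally isotropic
  have hWiso : ∀ u ∈ W, ∀ w ∈ W, B u w = 0 := by
    intro u hu w hw
    exact hWorth w (Submodule.mem_sup_left hw) u hu
  set d := Module.finrank K W with hddef
  have hdt : d ≤ t := ht.2 ⟨W, rfl, hWiso⟩
  have hd2 : d ≤ 2 := le_trans hdt ht2
  -- |E0| ≤ card W = 2^d
  have hcardW : Fintype.card W = 2 ^ d := by
    rw [Module.card_eq_pow_finrank (K := K) (V := W), hK]
  have hE0card : E0.card ≤ 2 ^ d := by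
    rw [← hcardW]
    have : E0.card ≤ (Finset.univ : Finset W).card := by
      apply Finset.card_le_card_of_injOn
        (fun u => if h : u ∈ W then (⟨u, h⟩ : W) else 0)
      · intro u _; exact Finset.mem_univ _
      · intro a ha b hb hab
        have haW : a ∈ W := Submodule.subset_span ha
        have hbW : b ∈ W := Submodule.subset_span hb
        simp only [dif_pos haW, dif_pos hbW] at hab
        exact congrArg Subtype.val hab
    simpa using this
  -- key computation for sums over E1
  have key : ∀ (f : F → K) (j : F), j ∈ E1 →
      B (∑ i ∈ E1, f i • i) j = f j * B j j := by
    intro f j hj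
    have : B (∑ i ∈ E1, f i • i) j = ∑ i ∈ E1, f i * B i j := by
      rw [map_sum]
      simp [LinearMap.sum_apply]
    rw [this]
    rw [Finset.sum_eq_single j]
    · intro i hi hij
      rw [hE i (hE1mem i hi).1 j (hE1mem j hj).1 hij, mul_zero]
    · intro h; exact absurd hj h
  -- E1 is linearly independent
  have hli := (linearIndepOn_iff (R := K) (v := (id : F → F)) (s := (E1 : Set F))).2 (by
      intro l hl hl0
      have hsupp : ↑l.support ⊆ (E1 : Set F) := Finsupp.mem_supported K l |>.1 hl
      have hsum : ∑ i ∈ E1, l i • i = 0 := by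
        rw [← hl0, Finsupp.linearCombination_apply, Finsupp.sum]
        refine (Finset.sum_subset (fun x hx => hsupp hx) ?_).symm
        intro x _ hx
        rw [Finsupp.notMem_support_iff.1 hx, zero_smul]
      ext j
      by_cases hj : j ∈ E1
      · have h0 : B (∑ i ∈ E1, l i • i) j = 0 := by rw [hsum]; simp
        rw [key l j hj] at h0
        rcases mul_eq_zero.1 h0 with h | h
        · simpa using h
        · exact absurd h (hE1mem j hj).2
      · simp [Finsupp.notMem_support_iff.1 (fun hc => hj (hsupp hc))])
  have hVrank : Module.finrank K V = E1.card :=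
    finrank_span_finset_eq_card hli
  -- W ⊓ V = ⊥
  have hinf : W ⊓ V = ⊥ := by
    rw [eq_bot_iff]
    rintro x ⟨hxW, hxV⟩
    obtain ⟨f, -, hf⟩ := Submodule.mem_span_finset.1 hxV
    have hf0 : ∀ j ∈ E1, f j = 0 := by
      intro j hj
      have hjV : j ∈ W ⊔ V :=
        Submodule.mem_sup_right (Submodule.subset_span (by exact_mod_cast hj))
      have h0 : B x j = 0 := hWorth j hjV x hxW
      rw [← hf, key f j hj] at h0
      rcases mul_eq_zero.1 h0 with h | h
      · exact h
      · exact absurd h (hE1mem j hj).2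
    have : x = 0 := by
      rw [← hf]
      exact Finset.sum_eq_zero fun j hj => by rw [hf0 j hj, zero_smul]
    simp [this]
  -- W ≤ (W ⊔ V)ᗮ
  have hWU : W ≤ LinearMap.BilinForm.orthogonal B (W ⊔ V) := by
    intro w hw
    rw [LinearMap.BilinForm.mem_orthogonal_iff]
    intro u hu
    show B u w = 0
    rw [hsymm]
    exact hWorth u hu w hw
  -- dimension count
  have hsup : Module.finrank K (W ⊔ V : Submodule K F) = d + E1.card := by
    have := Submodule.finrank_sup_add_finrank_inf_eq W V
    rw [hinf, hVrank] at this
    simpa using this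
  have horth : Module.finrank K (LinearMap.BilinForm.orthogonal B (W ⊔ V)) =
      Module.finrank K F - Module.finrank K (W ⊔ V : Submodule K F) :=
    LinearMap.BilinForm.finrank_orthogonal hndeg _
  have hdle : d ≤ Module.finrank K (LinearMap.BilinForm.orthogonal B (W ⊔ V)) :=
    Submodule.finrank_mono hWU
  have hsuple : Module.finrank K (W ⊔ V : Submodule K F) ≤ Module.finrank K F :=
    Submodule.finrank_le _
  have hpow : 2 ^ d ≤ 2 * d + 1 := by interval_cases d <;> norm_num
  rw [horth, hnrank] at hdle
  rw [hnrank] at hsuple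
  rw [hsup] at hdle hsuple
  omega
end

section
/- Let q be an even prime power (i.e., F_q has characteristic 2), n ≥ 2, and let B be a nondegenerate symmetric F_q-bilinear form on F_{q^n} (viewed as an n-dimensional F_q-vector space). Let t(B) be the largest dimension of an F_q-subspace W ⊆ F_{q^n} with B(u, w) = 0 for all u, w ∈ W. If q > 2 or t(B) ≥ 3, then every set E ⊆ F_{q^n} such that B(u, w) = 0 for all u, w ∈ E with u ≠ w satisfies |E| ≤ q^{t(B)} + n − 2·t(B); moreover t(B) ≤ n/2. -/
open LinearMap Module Submodule

private lemma aux1' {m q : ℕ} (hm : 1 ≤ m) (hq : 2 ≤ q) (h : 2 ≤ m ∨ 3 ≤ q) :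
    ∀ k, m + 2 * k ≤ m * q ^ k := by
  intro k
  induction k with
  | zero => simp
  | succ k ih =>
    have h1 : 1 ≤ q ^ k := Nat.one_le_pow _ _ (by omega)
    have hA1 : 1 ≤ m * q ^ k := Nat.mul_le_mul hm h1
    rw [pow_succ, ← mul_assoc]
    rcases h with h2 | h2
    · have hA2 : 2 ≤ m * q ^ k := le_trans h2 (Nat.le_mul_of_pos_right _ (by omega))
      have : (m * q ^ k) * 2 ≤ (m * q ^ k) * q := Nat.mul_le_mul_left _ hq
      omega
    · have : (m * q ^ k) * 3 ≤ (m * q ^ k) * q := Nat.mul_le_mul_left _ h2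
      omega

private lemma aux2' : ∀ t, 3 ≤ t → 1 + 2 * t ≤ 2 ^ t := by
  intro t ht
  induction t with
  | zero => omega
  | succ k ih =>
    rcases Nat.lt_or_ge k 3 with hk | hk
    · have : k = 2 := by omega
      subst this; norm_num
    · have h1 := ih (by omega)
      have h2 : 2 ^ 1 ≤ 2 ^ k := Nat.pow_le_pow_right (by norm_num) (by omega)
      norm_num at h2
      rw [pow_succ]
      omega

private lemma key_arith' {q d t : ℕ} (hq : 2 ≤ q) (hdt : d ≤ t) (h : 3 ≤ q ∨ 3 ≤ t) :
    q ^ d + 2 * t ≤ q ^ t + 2 * d := by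
  obtain ⟨k, rfl⟩ : ∃ k, t = d + k := ⟨t - d, by omega⟩
  rw [pow_add]
  have hm : 1 ≤ q ^ d := Nat.one_le_pow _ _ (by omega)
  rcases h with h3 | h3
  · have := aux1' hm hq (Or.inr h3) k; omega
  · rcases Nat.lt_or_ge q 3 with hq3 | hq3
    · have hq2 : q = 2 := by omega
      subst hq2
      rcases Nat.eq_zero_or_pos d with hd | hd
      · subst hd
        simp only [pow_zero, one_mul, Nat.zero_add, Nat.mul_zero, Nat.add_zero]
        have := aux2' k (by omega); omega
      · have hm2 : 2 ≤ 2 ^ d := by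
          calc 2 = 2 ^ 1 := by norm_num
          _ ≤ 2 ^ d := Nat.pow_le_pow_right (by norm_num) hd
        have := aux1' hm hq (Or.inl hm2) k; omega
    · have := aux1' hm hq (Or.inr hq3) k; omega

private lemma iso_bound' {K V : Type*} [Field K] [AddCommGroup V] [Module K V]
    [FiniteDimensional K V]
    {B : LinearMap.BilinForm K V} (hB : LinearMap.BilinForm.Nondegenerate B) (hB₀ : B.IsRefl)
    {W : Submodule K V} (hW : ∀ u ∈ W, ∀ w ∈ W, B u w = 0) :
    2 * finrank K W ≤ finrank K V := by
  have h1 : W ≤ B.orthogonal W := fun x hx n hn => hW n hn x hx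
  have h2 := Submodule.finrank_mono h1
  have h3 := LinearMap.BilinForm.finrank_orthogonal hB W
  have h4 := Submodule.finrank_le W
  omega

private lemma span_ortho' {K F : Type*} [Field K] [AddCommGroup F] [Module K F]
    (B : F →ₗ[K] F →ₗ[K] K) {s t : Set F}
    (h : ∀ u ∈ s, ∀ w ∈ t, B u w = 0) :
    ∀ u ∈ Submodule.span K s, ∀ w ∈ Submodule.span K t, B u w = 0 := by
  have step1 : ∀ w ∈ t, ∀ u ∈ Submodule.span K s, B u w = 0 := by
    intro w hw u hu
    induction hu using Submodule.span_induction with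
    | mem x hx => exact h x hx w hw
    | zero => simp
    | add x y _ _ hx hy => simp [LinearMap.add_apply, hx, hy]
    | smul c x _ hx => simp [LinearMap.smul_apply, hx]
  intro u hu w hw
  induction hw using Submodule.span_induction with
  | mem x hx => exact step1 x hx u hu
  | zero => simp
  | add x y _ _ hx hy => simp [hx, hy]
  | smul c x _ hx => simp [hx]

/-- let `q` be an even prime power, `B` a nondegenerate symmetric
`F_q`-bilinear form on `F_{q^n}`, and `t(B)` the largest dimension of a totally
`B`-isotropic `F_q`-subspace. If `q > 2` or `t(B) ≥ 3`, then every pairwise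
`B`-orthogonal set `E ⊆ F_{q^n}` satisfies `|E| ≤ q^{t(B)} + n - 2 t(B)`; moreover
`t(B) ≤ n / 2`. -/
theorem pairwise_orthogonal_card_le_char_two (q n : ℕ)
    (hq : IsPrimePow q) (hqeven : Even q) (hn : 2 ≤ n)
    (K F : Type*) [Field K] [Field F] [Algebra K F] [Fintype K] [Fintype F]
    (hK : Fintype.card K = q) (hF : Fintype.card F = q ^ n)
    (B : F →ₗ[K] F →ₗ[K] K)
    (hsymm : ∀ x y : F, B x y = B y x)
    (hnd : ∀ x : F, (∀ y : F, B x y = 0) → x = 0)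
    (t : ℕ)
    (ht : IsGreatest {d : ℕ | ∃ W : Submodule K F, Module.finrank K W = d ∧
      ∀ u ∈ W, ∀ w ∈ W, B u w = 0} t)
    (h : 2 < q ∨ 3 ≤ t) :
    (∀ E : Finset F, (∀ u ∈ E, ∀ w ∈ E, u ≠ w → B u w = 0) →
      E.card ≤ q ^ t + n - 2 * t) ∧
    2 * t ≤ n := by
  classical
  have hq2 : 2 ≤ q := hq.two_le
  have hfd : FiniteDimensional K F := Module.Finite.of_finite
  have hnF : finrank K F = n := by
    have hc : Fintype.card F = Fintype.card K ^ finrank K F := card_eq_pow_finrank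
    rw [hK, hF] at hc
    exact (Nat.pow_right_injective hq2 hc.symm)
  have hrefl : B.IsRefl := fun x y hxy => by rw [hsymm]; exact hxy
  have hndB : LinearMap.BilinForm.Nondegenerate B :=
    (LinearMap.IsRefl.nondegenerate_iff_separatingLeft hrefl).2 hnd
  -- second part: 2t ≤ n
  have h2tn : 2 * t ≤ n := by
    obtain ⟨W, hWrank, hWiso⟩ := ht.1
    have := iso_bound' hndB hrefl hWiso
    omega
  refine ⟨?_, h2tn⟩
  intro E hE
  set E₀ : Finset F := E.filter (fun x => B x x = 0) with hE₀def
  set E₁ : Finset F := E.filter (fun x => ¬ (B x x = 0)) with hE₁def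
  have hsplit : E₀.card + E₁.card = E.card := Finset.card_filter_add_card_filter_not _
  -- U = span of isotropic part
  set U : Submodule K F := Submodule.span K (E₀ : Set F) with hUdef
  have hU : ∀ u ∈ U, ∀ w ∈ U, B u w = 0 := by
    apply span_ortho'
    intro u hu w hw
    simp only [hE₀def, Finset.coe_filter, Set.mem_setOf_eq] at hu hw
    rcases eq_or_ne u w with rfl | hne
    · exact hu.2
    · exact hE u hu.1 w hw.1 hne
  set d : ℕ := finrank K U with hddef
  have hdt : d ≤ t := ht.2 ⟨U, rfl, hU⟩
  -- |E₀| ≤ q ^ d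
  have hE0card : E₀.card ≤ q ^ d := by
    have hsub : (E₀ : Set F) ⊆ (U : Set F) := Submodule.subset_span
    have h1 : E₀.card ≤ Fintype.card U := by
      apply Finset.card_le_card_of_injOn
        (fun x => if hx : x ∈ U then (⟨x, hx⟩ : U) else 0) (fun a _ => Finset.mem_univ _)
      intro a ha b hb hab
      have haU : a ∈ U := hsub ha
      have hbU : b ∈ U := hsub hb
      simp only [dif_pos haU, dif_pos hbU] at hab
      exact congrArg Subtype.val hab
    have h2 : Fintype.card U = q ^ d := by
      rw [show Fintype.card U = Fintype.card K ^ finrank K U from card_eq_pow_finrank, hK]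
    omega
  -- E₁ is linearly independent
  have hE1ind : LinearIndependent K ((↑) : E₁ → F) := by
    apply LinearMap.BilinForm.linearIndependent_of_iIsOrtho (B := B)
    · intro i j hij
      have hi := i.2; have hj := j.2
      simp only [hE₁def, Finset.mem_filter] at hi hj
      exact hE i hi.1 j hj.1 (fun hc => hij (Subtype.ext hc))
    · intro i
      have hi := i.2
      simp only [hE₁def, Finset.mem_filter] at hi
      exact hi.2
  set W : Submodule K F := Submodule.span K (E₁ : Set F) with hWdef
  set m : ℕ := E₁.card with hmdef
  have hWrank : finrank K W = m := finrank_span_finset_eq_card hE1ind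
  -- disjointness of W with its orthogonal
  have hWkey : ∀ x ∈ W, (∀ j ∈ E₁, B j x = 0) → x = 0 := by
    intro x hx hj
    obtain ⟨c, -, rfl⟩ := mem_span_finset.1 hx
    have hc : ∀ j ∈ E₁, c j = 0 := by
      intro j hjE
      have h1 := hj j hjE
      have h2 : B j (∑ i ∈ E₁, c i • i) = c j * B j j := by
        rw [map_sum]
        rw [Finset.sum_eq_single_of_mem j hjE]
        · simp [smul_eq_mul]
        · intro b hb hbj
          have : B j b = 0 := hE j (Finset.mem_of_mem_filter _ hjE) b
            (Finset.mem_of_mem_filter _ hb) (fun hc => hbj hc.symm)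
          simp [this]
      rw [h2] at h1
      have hjj : B j j ≠ 0 := by
        have := Finset.mem_filter.1 hjE
        exact this.2
      exact (mul_eq_zero.1 h1).resolve_right hjj
    apply Finset.sum_eq_zero
    intro i hi
    rw [hc i hi, zero_smul]
  have hdisj : Disjoint W (LinearMap.BilinForm.orthogonal B W) := by
    rw [Submodule.disjoint_def]
    intro x hxW hxO
    apply hWkey x hxW
    intro j hjE
    exact hxO j (Submodule.subset_span hjE)
  have hWnd : LinearMap.BilinForm.Nondegenerate (LinearMap.BilinForm.restrict B W) :=
    LinearMap.BilinForm.nondegenerate_restrict_of_disjoint_orthogonal B hrefl hdisj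
  set O : Submodule K F := LinearMap.BilinForm.orthogonal B W with hOdef
  have hcompl : IsCompl W O :=
    LinearMap.BilinForm.isCompl_orthogonal_of_restrict_nondegenerate hrefl hWnd
  -- restriction of B to O is nondegenerate
  have hOnd : LinearMap.BilinForm.Nondegenerate (LinearMap.BilinForm.restrict B O) := by
    have hR : (LinearMap.BilinForm.restrict B O).IsRefl := fun x y hxy => by
      simp only [LinearMap.BilinForm.restrict_apply, LinearMap.domRestrict_apply] at *
      rw [hsymm]; exact hxy
    refine (LinearMap.IsRefl.nondegenerate_iff_separatingLeft hR).2 ?_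
    intro x hx
    have hx0 : (x : F) = 0 := by
      apply hnd
      intro y
      obtain ⟨w, o, hw, ho, rfl⟩ := Submodule.codisjoint_iff_exists_add_eq.mp hcompl.codisjoint y
      have h1 : B (x : F) w = 0 := by rw [hsymm]; exact x.2 w hw
      have h2 : B (x : F) o = 0 := hx ⟨o, ho⟩
      rw [map_add, h1, h2, add_zero]
    exact Subtype.ext hx0
  have hOrefl : (LinearMap.BilinForm.restrict B O).IsRefl := fun x y hxy => by
    simp only [LinearMap.BilinForm.restrict_apply, LinearMap.domRestrict_apply] at *
    rw [hsymm]; exact hxy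
  -- U ≤ O
  have hUO : U ≤ O := by
    intro u hu
    intro w hwW
    have base : ∀ v ∈ (E₁ : Set F), ∀ e ∈ (E₀ : Set F), B v e = 0 := by
      intro v hv e he
      simp only [hE₁def, hE₀def, Finset.coe_filter, Set.mem_setOf_eq] at hv he
      rcases eq_or_ne v e with rfl | hne
      · exact absurd he.2 hv.2
      · exact hE v hv.1 e he.1 hne
    exact span_ortho' B base w hwW u hu
  set U' : Submodule K O := U.comap O.subtype with hU'def
  have hU'rank : finrank K U' = d := (Submodule.comapSubtypeEquivOfLe hUO).finrank_eq
  have hU'iso : ∀ u ∈ U', ∀ w ∈ U', (LinearMap.BilinForm.restrict B O) u w = 0 := by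
    intro u hu w hw
    exact hU u hu w hw
  have hbound := iso_bound' hOnd hOrefl hU'iso
  rw [hU'rank] at hbound
  have hOrank : finrank K O = n - m := by
    rw [hOdef, LinearMap.BilinForm.finrank_orthogonal hndB, hnF, hWrank]
  have hmn : m ≤ n := by rw [← hWrank, ← hnF]; exact Submodule.finrank_le W
  rw [hOrank] at hbound
  -- arithmetic finish
  have harith : q ^ d + 2 * t ≤ q ^ t + 2 * d := by
    apply key_arith' hq2 hdt
    omega
  have h1 : E.card ≤ q ^ d + m := by omega
  generalize hqd : q ^ d = a at *
  generalize hqt : q ^ t = b at *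
  omega
end

section
/- Let q be a prime power and n ≥ 2 such that q is even or q·n is odd, and let U ⊊ F_{q^n} be an F_q-linear subspace of dimension n − 1. Then there exists a ∈ F_{q^n}, a ≠ 0, such that U = a²·U_{q,n} = {a²x : x ∈ F_{q^n}, Tr_n(x) = 0}, and the graphs G_U and G_{U_{q,n}} are isomorphic. -/
open Polynomial in
private lemma aux_fixed_mem_range {K F : Type*} [Field K] [Field F] [Algebra K F]
    [Fintype K] [Fintype F] {z : F} (hz : z ^ Fintype.card K = z) :
    z ∈ Set.range (algebraMap K F) := by
  classical
  have h1 : 1 < Fintype.card K := Fintype.one_lt_card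
  set q := Fintype.card K with hq
  have hP0 : (X ^ q - X : F[X]) ≠ 0 := FiniteField.X_pow_card_sub_X_ne_zero F h1
  have hPd : (X ^ q - X : F[X]).natDegree = q := FiniteField.X_pow_card_sub_X_natDegree_eq F h1
  set R := (X ^ q - X : F[X]).roots.toFinset with hR
  set I : Finset F := Finset.univ.image (algebraMap K F) with hI
  have hIR : I ⊆ R := by
    intro w hw
    rw [hI, Finset.mem_image] at hw
    obtain ⟨l, -, rfl⟩ := hw
    rw [hR, Multiset.mem_toFinset, Polynomial.mem_roots hP0]
    simp only [Polynomial.IsRoot, Polynomial.eval_sub, Polynomial.eval_pow, Polynomial.eval_X]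
    rw [← map_pow, FiniteField.pow_card, sub_self]
  have hcardI : I.card = q := by
    rw [hI, Finset.card_image_of_injective _ (algebraMap K F).injective, Finset.card_univ]
  have hcardR : R.card ≤ q :=
    le_trans (Multiset.toFinset_card_le _) (le_of_le_of_eq (Polynomial.card_roots' _) hPd)
  have hRI : R = I := (Finset.eq_of_subset_of_card_le hIR (le_trans hcardR hcardI.ge)).symm
  have hzR : z ∈ R := by
    rw [hR, Multiset.mem_toFinset, Polynomial.mem_roots hP0]
    simp only [Polynomial.IsRoot, Polynomial.eval_sub, Polynomial.eval_pow, Polynomial.eval_X]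
    rw [hz, sub_self]
  rw [hRI, hI, Finset.mem_image] at hzR
  obtain ⟨l, -, rfl⟩ := hzR
  exact ⟨l, rfl⟩

private lemma aux_exists_c (q n : ℕ) (hq : IsPrimePow q) (hn : 2 ≤ n)
    (K F : Type*) [Field K] [Field F] [Algebra K F] [Fintype K] [Fintype F]
    (hK : Fintype.card K = q) (hF : Fintype.card F = q ^ n)
    (U : Submodule K F) (hU : U ≠ ⊤) (hd : Module.finrank K U = n - 1) :
    ∃ c : F, c ≠ 0 ∧ ∀ x : F, x ∈ U ↔ ∑ i ∈ Finset.range n, (c * x) ^ q ^ i = 0 := by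
  classical
  have hq2 : 2 ≤ q := hq.two_le
  obtain ⟨p, k, hpp, hk, hqpk⟩ := hq
  have hpp' : p.Prime := Nat.prime_iff.mpr hpp
  haveI : Fact p.Prime := ⟨hpp'⟩
  -- characteristic of F is p
  haveI hcharF : CharP F p := by
    have hr := ringChar.charP F
    obtain ⟨m, hm, hcard⟩ := FiniteField.card F (ringChar F)
    have h1 : (ringChar F) ^ (m : ℕ) = p ^ (k * n) := by
      rw [← hcard, hF, pow_mul, hqpk]
    have hdvd : p ∣ ringChar F := by
      have : p ∣ (ringChar F) ^ (m : ℕ) := by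
        rw [h1]; exact dvd_pow_self p (by positivity)
      exact hpp'.dvd_of_dvd_pow this
    have hpe : p = ringChar F := ((Nat.prime_dvd_prime_iff_eq hpp' hm).mp hdvd)
    rwa [hpe]
  haveI : ExpChar F p := expChar_prime F p
  -- the trace-like linear map
  have hqpow : ∀ i : ℕ, q ^ i = p ^ (k * i) := fun i => by rw [pow_mul, hqpk]
  let T : F →ₗ[K] F :=
    { toFun := fun x => ∑ i ∈ Finset.range n, x ^ q ^ i
      map_add' := fun x y => by
        rw [← Finset.sum_add_distrib]
        refine Finset.sum_congr rfl fun i _ => ?_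
        rw [hqpow i, add_pow_char_pow]
      map_smul' := fun l x => by
        simp only [RingHom.id_apply]
        rw [Finset.smul_sum]
        refine Finset.sum_congr rfl fun i _ => ?_
        rw [Algebra.smul_def, Algebra.smul_def, mul_pow, ← map_pow, ← hK,
          FiniteField.pow_card_pow] }
  have hTdef : ∀ x : F, T x = ∑ i ∈ Finset.range n, x ^ q ^ i := fun _ => rfl
  -- T has values in the image of K
  have hfr : ∀ y : F, y ^ q = iterateFrobenius F p k y := fun y => by
    rw [iterateFrobenius_def, hqpk]
  have hTfix : ∀ x : F, (T x) ^ q = T x := by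
    intro x
    rw [hTdef, hfr, map_sum]
    have h1 : ∀ i ∈ Finset.range n, iterateFrobenius F p k (x ^ q ^ i) = x ^ q ^ (i + 1) :=
      fun i _ => by rw [← hfr, ← pow_mul, ← pow_succ]
    rw [Finset.sum_congr rfl h1]
    have h0 : x ^ q ^ n = x ^ q ^ 0 := by
      rw [pow_zero, pow_one, ← hF, FiniteField.pow_card]
    calc ∑ i ∈ Finset.range n, x ^ q ^ (i + 1)
        = (∑ i ∈ Finset.range (n + 1), x ^ q ^ i) - x ^ q ^ 0 := by
          rw [Finset.sum_range_succ']; ring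
      _ = (∑ i ∈ Finset.range n, x ^ q ^ i) + x ^ q ^ n - x ^ q ^ 0 := by
          rw [Finset.sum_range_succ]
      _ = ∑ i ∈ Finset.range n, x ^ q ^ i := by rw [h0]; ring
  have hTW : ∀ x : F, T x ∈ LinearMap.range (Algebra.linearMap K F) := by
    intro x
    have := aux_fixed_mem_range (K := K) (F := F) (z := T x) (by rw [hK]; exact hTfix x)
    obtain ⟨l, hl⟩ := this
    exact ⟨l, hl⟩
  -- T is nonzero
  have hT0 : ∃ x₀ : F, T x₀ ≠ 0 := by
    set P : Polynomial F := ∑ i ∈ Finset.range n, Polynomial.X ^ q ^ i with hP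
    have heval : ∀ x : F, P.eval x = T x := by
      intro x
      rw [hP, hTdef, Polynomial.eval_finset_sum]
      exact Finset.sum_congr rfl fun i _ => by
        rw [Polynomial.eval_pow, Polynomial.eval_X]
    have hinj : Function.Injective (q ^ ·) := Nat.pow_right_injective hq2
    have hcoeff : P.coeff (q ^ (n - 1)) = 1 := by
      rw [hP, Polynomial.finset_sum_coeff]
      rw [Finset.sum_eq_single (n - 1)]
      · rw [Polynomial.coeff_X_pow, if_pos rfl]
      · intro i hi hne
        rw [Polynomial.coeff_X_pow, if_neg]
        intro h
        exact hne (hinj h.symm)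
      · intro h
        exact absurd (Finset.mem_range.mpr (by omega)) h
    have hP0 : P ≠ 0 := fun h => by simp [h] at hcoeff
    have hdeg : P.natDegree ≤ q ^ (n - 1) := by
      refine Polynomial.natDegree_sum_le_of_forall_le _ _ fun i hi => ?_
      rw [Polynomial.natDegree_X_pow]
      exact Nat.pow_le_pow_right (by omega) (by
        have := Finset.mem_range.mp hi; omega)
    have hlt : P.natDegree < Fintype.card F := by
      rw [hF]
      exact lt_of_le_of_lt hdeg (Nat.pow_lt_pow_right (by omega) (by omega))
    obtain ⟨x₀, hx₀⟩ := P.exists_eval_ne_zero_of_natDegree_lt_card hP0 (by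
      rw [Cardinal.mk_fintype]; exact_mod_cast hlt)
    exact ⟨x₀, by rwa [heval] at hx₀⟩
  -- dimensions
  haveI : FiniteDimensional K F := Module.finite_iff_finite.mpr inferInstance
  have hrankF : Module.finrank K F = n := by
    have hcard := Module.card_eq_pow_finrank (K := K) (V := F)
    rw [hK, hF] at hcard
    exact (Nat.pow_right_injective hq2 hcard.symm)
  set W := LinearMap.range (Algebra.linearMap K F) with hWdef
  have hW1 : Module.finrank K W = 1 := by
    rw [hWdef, LinearMap.finrank_range_of_inj, Module.finrank_self]
    intro a b hab
    exact (algebraMap K F).injective hab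
  -- the pairing map
  let Φ : F →ₗ[K] (F →ₗ[K] W) :=
    { toFun := fun c => (T.comp (LinearMap.mulLeft K c)).codRestrict W fun x => hTW (c * x)
      map_add' := fun c c' => by
        ext x
        show T ((c + c') * x) = T (c * x) + T (c' * x)
        rw [add_mul, map_add]
      map_smul' := fun l c => by
        ext x
        show T ((l • c) * x) = l • T (c * x)
        rw [smul_mul_assoc, map_smul] }
  have hΦinj : Function.Injective Φ := by
    rw [injective_iff_map_eq_zero]
    intro c hc
    by_contra hcne
    obtain ⟨x₀, hx₀⟩ := hT0
    have h1 : ((Φ c) (c⁻¹ * x₀) : F) = 0 := by rw [hc]; rfl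
    have h2 : ((Φ c) (c⁻¹ * x₀) : F) = T x₀ := by
      show T (c * (c⁻¹ * x₀)) = T x₀
      rw [mul_inv_cancel_left₀ hcne]
    exact hx₀ (h2.symm.trans h1)
  have hΦsurj : Function.Surjective Φ := by
    have hfr2 : Module.finrank K F = Module.finrank K (F →ₗ[K] W) := by
      rw [Module.finrank_linearMap, hW1, hrankF, mul_one]
    exact (LinearMap.injective_iff_surjective_of_finrank_eq_finrank (K := K) (V := F) (V₂ := F →ₗ[K] W) hfr2).mp hΦinj
  -- the hyperplane as a kernel
  have hquot : Module.finrank K (F ⧸ U) = 1 := by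
    have hq1 := Submodule.finrank_quotient_add_finrank U
    rw [hd, hrankF] at hq1
    omega
  obtain ⟨e⟩ := FiniteDimensional.nonempty_linearEquiv_of_finrank_eq
    (hquot.trans hW1.symm)
  set ψ := (e.toLinearMap).comp U.mkQ with hψdef
  have hkerψ : LinearMap.ker ψ = U := by
    rw [hψdef, LinearMap.ker_comp, LinearEquiv.ker, Submodule.comap_bot, Submodule.ker_mkQ]
  obtain ⟨c, hc⟩ := hΦsurj ψ
  have hcne : c ≠ 0 := by
    rintro rfl
    rw [map_zero] at hc
    apply hU
    rw [← hkerψ, ← hc, LinearMap.ker_zero]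
  refine ⟨c, hcne, fun x => ?_⟩
  have hx : x ∈ U ↔ ψ x = 0 := by rw [← hkerψ]; exact LinearMap.mem_ker.symm
  rw [hx, ← hc]
  constructor
  · intro h
    have : ((Φ c) x : F) = 0 := by rw [h]; rfl
    exact this
  · intro h
    exact Subtype.ext h

/-- if `q` is even or `q·n` is odd and `U ⊊ F_{q^n}` is an `F_q`-subspace of
dimension `n - 1`, then `U = a² · U_{q,n}` for some `a ≠ 0`, where
`U_{q,n} = {x | Tr_n(x) = 0}` with `Tr_n(x) = ∑_{i<n} x^(q^i)`, and the graphs `G_U` and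
`G_{U_{q,n}}` are isomorphic. -/
theorem hyperplane_is_square_multiple_of_trace_kernel (q n : ℕ)
    (hq : IsPrimePow q) (hn : 2 ≤ n) (hpar : Even q ∨ Odd (q * n))
    (K F : Type*) [Field K] [Field F] [Algebra K F] [Fintype K] [Fintype F]
    (hK : Fintype.card K = q) (hF : Fintype.card F = q ^ n)
    (U : Submodule K F) (hU : U ≠ ⊤) (hd : Module.finrank K U = n - 1) :
    ∃ a : F, a ≠ 0 ∧
      (U : Set F) = (fun x => a ^ 2 * x) ''
        {x : F | ∑ i ∈ Finset.range n, x ^ q ^ i = 0} ∧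
      Nonempty ((paleyGraph (U : Set F)) ≃g
        (paleyGraph {x : F | ∑ i ∈ Finset.range n, x ^ q ^ i = 0})) := by
  classical
  have hq2 : 2 ≤ q := hq.two_le
  obtain ⟨c, hc0, hcU⟩ := aux_exists_c q n hq hn K F hK hF U hU hd
  -- linearity of the trace sum under multiplication by elements of K
  have hB : ∀ (l : K) (y : F), ∑ i ∈ Finset.range n, ((algebraMap K F l) * y) ^ q ^ i
      = (algebraMap K F l) * ∑ i ∈ Finset.range n, y ^ q ^ i := by
    intro l y
    rw [Finset.mul_sum]
    refine Finset.sum_congr rfl fun i _ => ?_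
    rw [mul_pow, ← map_pow, ← hK, FiniteField.pow_card_pow]
  -- the square-class adjustment
  have hsq : ∃ l : K, l ≠ 0 ∧ IsSquare ((algebraMap K F l) * c⁻¹) := by
    obtain ⟨p, k, hpp, hk, hqpk⟩ := hq
    have hpp' : p.Prime := Nat.prime_iff.mpr hpp
    haveI : Fact p.Prime := ⟨hpp'⟩
    have hcharF : ringChar F = p := by
      obtain ⟨m, hm, hcard⟩ := FiniteField.card F (ringChar F)
      have h1 : (ringChar F) ^ (m : ℕ) = p ^ (k * n) := by
        rw [← hcard, hF, pow_mul, hqpk]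
      have hdvd : p ∣ ringChar F := hpp'.dvd_of_dvd_pow (n := (m : ℕ)) (by
        rw [h1]; exact dvd_pow_self p (by positivity))
      exact ((Nat.prime_dvd_prime_iff_eq hpp' hm).mp hdvd).symm
    have hcharK : ringChar K = p := by
      obtain ⟨m, hm, hcard⟩ := FiniteField.card K (ringChar K)
      have h1 : (ringChar K) ^ (m : ℕ) = p ^ k := by rw [← hcard, hK, hqpk]
      have hdvd : p ∣ ringChar K := hpp'.dvd_of_dvd_pow (n := (m : ℕ)) (by
        rw [h1]; exact dvd_pow_self p (by omega))
      exact ((Nat.prime_dvd_prime_iff_eq hpp' hm).mp hdvd).symm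
    rcases hpar with heven | hodd
    · -- q even : everything is a square in characteristic two
      have hp2 : p = 2 := by
        have h2 : (2 : ℕ) ∣ p ^ k := by rw [hqpk]; exact heven.two_dvd
        exact ((Nat.prime_dvd_prime_iff_eq Nat.prime_two hpp').mp
          (Nat.Prime.dvd_of_dvd_pow Nat.prime_two h2)).symm
      exact ⟨1, one_ne_zero, by
        rw [map_one, one_mul]
        exact FiniteField.isSquare_of_char_two (by rw [hcharF, hp2]) _⟩
    · -- q odd and n odd
      obtain ⟨hqodd, hnodd⟩ := (Nat.odd_mul).mp hodd
      have hpne2 : p ≠ 2 := by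
        intro h
        rw [h] at hqpk
        rw [Nat.odd_iff, ← hqpk] at hqodd
        have : 2 ∣ 2 ^ k := dvd_pow_self 2 (by omega)
        omega
      have hFchar2 : ringChar F ≠ 2 := by rw [hcharF]; exact hpne2
      have hKchar2 : ringChar K ≠ 2 := by rw [hcharK]; exact hpne2
      by_cases hcsq : IsSquare (c⁻¹ : F)
      · exact ⟨1, one_ne_zero, by rw [map_one, one_mul]; exact hcsq⟩
      obtain ⟨l, hlns⟩ := FiniteField.exists_nonsquare (F := K) hKchar2
      have hl0 : l ≠ 0 := fun h => hlns (by rw [h]; exact IsSquare.zero)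
      have hl0' : algebraMap K F l ≠ 0 := fun h =>
        hl0 ((algebraMap K F).injective (by rw [h, map_zero]))
      have hcinv0 : (c⁻¹ : F) ≠ 0 := inv_ne_zero hc0
      obtain ⟨t, ht⟩ := hqodd
      -- the geometric sum
      set S : ℕ := ∑ i ∈ Finset.range n, q ^ i with hSdef
      have hq1 : 1 ≤ q := by omega
      have hqn1 : 1 ≤ q ^ n := Nat.one_le_pow _ _ (by omega)
      have hgeom : (q - 1) * S = q ^ n - 1 := by
        have h := geom_sum_mul (q : ℤ) n
        zify [hq1, hqn1]
        push_cast [hSdef]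
        linarith [h]
      have h2t : 2 * (t * S) = q ^ n - 1 := by
        have hq1' : q - 1 = 2 * t := by omega
        rw [← hgeom, hq1', mul_assoc]
      have hSodd : Odd S := by
        rw [Nat.odd_iff, hSdef, Finset.sum_nat_mod]
        have hterm : ∀ i ∈ Finset.range n, q ^ i % 2 = 1 := fun i _ =>
          Nat.odd_iff.mp ((Nat.odd_iff.mpr (by omega) : Odd q).pow)
        rw [Finset.sum_congr rfl hterm, Finset.sum_const, smul_eq_mul, mul_one,
          Finset.card_range]
        have := Nat.odd_iff.mp hnodd
        omega
      have hhalf : Fintype.card F / 2 = t * S := by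
        rw [hF]
        set A := q ^ n with hA
        set B := t * S with hB
        omega
      have hKhalf : Fintype.card K / 2 = t := by rw [hK]; omega
      -- l ^ ((q-1)/2) = -1 in K
      have hlK : l ^ t = -1 := by
        have h1 : l ^ t ≠ 1 := by
          intro h
          exact hlns ((FiniteField.isSquare_iff hKchar2 hl0).mpr (by rw [← hKhalf] at h; exact h))
        have h2 : l ^ t * l ^ t = 1 := by
          rw [← pow_add]
          have : t + t = Fintype.card K - 1 := by rw [hK]; omega
          rw [this]
          exact FiniteField.pow_card_sub_one_eq_one l hl0
        rcases mul_self_eq_one_iff.mp h2 with h | h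
        · exact absurd h h1
        · exact h
      -- c⁻¹ ^ (card F / 2) = -1 in F
      have hcF : (c⁻¹ : F) ^ (Fintype.card F / 2) = -1 := by
        have h1 : (c⁻¹ : F) ^ (Fintype.card F / 2) ≠ 1 := by
          intro h
          exact hcsq ((FiniteField.isSquare_iff hFchar2 hcinv0).mpr h)
        have h2 : (c⁻¹ : F) ^ (Fintype.card F / 2) * (c⁻¹ : F) ^ (Fintype.card F / 2) = 1 := by
          rw [← pow_add]
          have : Fintype.card F / 2 + Fintype.card F / 2 = Fintype.card F - 1 := by
            rw [hF]; omega
          rw [this]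
          exact FiniteField.pow_card_sub_one_eq_one _ hcinv0
        rcases mul_self_eq_one_iff.mp h2 with h | h
        · exact absurd h h1
        · exact h
      have hlF : (algebraMap K F l) ^ (Fintype.card F / 2) = -1 := by
        rw [hhalf, pow_mul, ← map_pow, hlK, map_neg, map_one]
        exact hSodd.neg_one_pow
      have hne : (algebraMap K F l) * c⁻¹ ≠ 0 := mul_ne_zero hl0' hcinv0
      refine ⟨l, hl0, (FiniteField.isSquare_iff hFchar2 hne).mpr ?_⟩
      rw [mul_pow, hlF, hcF]
      ring
  obtain ⟨l, hl0, s, hs⟩ := hsq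
  have hl0' : algebraMap K F l ≠ 0 := fun h =>
    hl0 ((algebraMap K F).injective (by rw [h, map_zero]))
  have hlc : algebraMap K F l * c⁻¹ ≠ 0 := mul_ne_zero hl0' (inv_ne_zero hc0)
  have ha0 : s ≠ 0 := by
    intro h
    rw [h, mul_zero] at hs
    exact hlc hs
  have ha2 : s ^ 2 = algebraMap K F l * c⁻¹ := by rw [sq, ← hs]
  -- the set equality
  have hset : (U : Set F) = (fun x => s ^ 2 * x) ''
      {x : F | ∑ i ∈ Finset.range n, x ^ q ^ i = 0} := by
    ext x
    simp only [Set.mem_image, Set.mem_setOf_eq, SetLike.mem_coe]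
    rw [hcU x]
    constructor
    · intro h
      refine ⟨(algebraMap K F l)⁻¹ * (c * x), ?_, ?_⟩
      · rw [← map_inv₀, hB, h, mul_zero]
      · rw [ha2]
        field_simp
    · rintro ⟨y, hy, rfl⟩
      have hcy : c * (s ^ 2 * y) = algebraMap K F l * y := by
        rw [ha2]
        field_simp
      rw [hcy, hB, hy, mul_zero]
  refine ⟨s, ha0, hset, ⟨?_⟩⟩
  have hsi : s⁻¹ ≠ 0 := inv_ne_zero ha0
  refine ⟨Equiv.mulLeft₀ s⁻¹ hsi, ?_⟩
  intro x y
  show ((s⁻¹ * x ≠ s⁻¹ * y) ∧ (s⁻¹ * x) * (s⁻¹ * y) ∈ _) ↔ ((x ≠ y) ∧ x * y ∈ _)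
  constructor
  · rintro ⟨hne, hmem⟩
    refine ⟨fun h => hne (by rw [h]), ?_⟩
    rw [hset]
    refine ⟨(s⁻¹ * x) * (s⁻¹ * y), hmem, ?_⟩
    field_simp
  · rintro ⟨hne, hmem⟩
    refine ⟨fun h => hne (mul_left_cancel₀ hsi h), ?_⟩
    rw [hset] at hmem
    obtain ⟨z, hz, hzx⟩ := hmem
    have hzz : (s⁻¹ * x) * (s⁻¹ * y) = z := by
      have : x * y = s ^ 2 * z := hzx.symm
      field_simp [this]
      exact this
    rw [hzz]
    exact hz
end

section
/- Let q be an odd prime power, n ≥ 2 even, let λ ∈ F_{q^n} be a non-square with λ ≠ 0, and let U ⊊ F_{q^n} be an F_q-linear subspace of dimension n − 1. Then there exist a ∈ F_{q^n}, a ≠ 0, and ε ∈ {1, λ} such that U = a²ε·U_{q,n} = {a²εx : x ∈ F_{q^n}, Tr_n(x) = 0}, and the graphs G_U and G_{ε·U_{q,n}} are isomorphic. -/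
/-- if `q` is odd, `n` is even, `λ ∈ F_{q^n}` is a nonzero non-square, and
`U ⊊ F_{q^n}` is an `F_q`-subspace of dimension `n - 1`, then `U = a²ε · U_{q,n}` for some
`a ≠ 0` and `ε ∈ {1, λ}`, where `U_{q,n} = {x | Tr_n(x) = 0}` with
`Tr_n(x) = ∑_{i<n} x^(q^i)`, and the graphs `G_U` and `G_{ε·U_{q,n}}` are isomorphic. -/
theorem hyperplane_classification_odd_q_even_n (q n : ℕ)
    (hq : IsPrimePow q) (hqodd : Odd q) (hn : 2 ≤ n) (hneven : Even n)
    (K F : Type*) [Field K] [Field F] [Algebra K F] [Fintype K] [Fintype F]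
    (hK : Fintype.card K = q) (hF : Fintype.card F = q ^ n)
    (lam : F) (hlam : lam ≠ 0) (hlamns : ∀ b : F, b ^ 2 ≠ lam)
    (U : Submodule K F) (hU : U ≠ ⊤) (hd : Module.finrank K U = n - 1) :
    ∃ a : F, a ≠ 0 ∧ ∃ ε ∈ ({1, lam} : Set F),
      (U : Set F) = (fun x => a ^ 2 * ε * x) ''
        {x : F | ∑ i ∈ Finset.range n, x ^ q ^ i = 0} ∧
      Nonempty ((paleyGraph (U : Set F)) ≃g
        (paleyGraph ((fun x => ε * x) ''
          {x : F | ∑ i ∈ Finset.range n, x ^ q ^ i = 0}))) := by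
  classical
  obtain ⟨p, k, hpp, hk, hq'⟩ := hq
  have hp : p.Prime := hpp.nat_prime
  haveI : Fact p.Prime := ⟨hp⟩
  have hq2 : 2 ≤ q := by
    subst hq'
    calc 2 ≤ p := hp.two_le
    _ = p ^ 1 := (pow_one p).symm
    _ ≤ p ^ k := Nat.pow_le_pow_right hp.pos hk
  -- characteristic of F is p
  haveI : CharP F (ringChar F) := ringChar.charP F
  obtain ⟨m, hp', hcard⟩ := FiniteField.card F (ringChar F)
  have hPeq : p = ringChar F := by
    have h1 : p ^ (k * n) = (ringChar F) ^ (m : ℕ) := by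
      rw [pow_mul, hq', ← hF, hcard]
    have hdvd : p ∣ (ringChar F) ^ (m : ℕ) := by
      rw [← h1]
      exact dvd_pow_self p (by positivity)
    exact (Nat.prime_dvd_prime_iff_eq hp hp').mp (hp.dvd_of_dvd_pow hdvd)
  haveI hcharF : CharP F p := hPeq ▸ ringChar.charP F
  -- basic power identities
  have hKq : ∀ c : K, c ^ q = c := fun c => hK ▸ FiniteField.pow_card c
  have hKqi : ∀ (c : K) (i : ℕ), c ^ q ^ i = c := by
    intro c i
    induction i with
    | zero => simp
    | succ j ih => rw [pow_succ, pow_mul, ih, hKq]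
  have hxqn : ∀ x : F, x ^ q ^ n = x := fun x => by
    rw [← hF]; exact FiniteField.pow_card x
  have hfrob : ∀ (i : ℕ) (x : F), x ^ q ^ i = iterateFrobenius F p (k * i) x := by
    intro i x
    rw [iterateFrobenius_def, pow_mul, hq']
  -- the trace linear map
  set Wset : Set F := {x : F | ∑ i ∈ Finset.range n, x ^ q ^ i = 0} with hWsetdef
  let T : F →ₗ[K] F :=
    { toFun := fun x => ∑ i ∈ Finset.range n, x ^ q ^ i
      map_add' := by
        intro x y
        rw [← Finset.sum_add_distrib]
        refine Finset.sum_congr rfl fun i _ => ?_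
        rw [hfrob i x, hfrob i y, hfrob i (x + y), map_add]
      map_smul' := by
        intro c x
        simp only [RingHom.id_apply, Finset.smul_sum]
        refine Finset.sum_congr rfl fun i _ => ?_
        rw [Algebra.smul_def, Algebra.smul_def, mul_pow, ← map_pow, hKqi]
    }
  have hTapp : ∀ x : F, T x = ∑ i ∈ Finset.range n, x ^ q ^ i := fun _ => rfl
  -- finrank of F
  have hrank : Module.finrank K F = n := by
    have h : Fintype.card F = Fintype.card K ^ Module.finrank K F := Module.card_eq_pow_finrank
    rw [hK, hF] at h
    exact (Nat.pow_right_injective hq2 h).symm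
  -- T is not identically zero
  have hTne : ∃ x₀ : F, T x₀ ≠ 0 := by
    by_contra h
    push_neg at h
    set P : Polynomial F := ∑ i ∈ Finset.range n, Polynomial.X ^ q ^ i with hPdef
    have hPeval : ∀ x : F, P.eval x = 0 := by
      intro x
      rw [hPdef, Polynomial.eval_finset_sum]
      simpa only [Polynomial.eval_pow, Polynomial.eval_X, hTapp] using h x
    have hPdeg : P.natDegree < Fintype.card F := by
      have h1 : P.natDegree ≤ q ^ (n - 1) := by
        refine Polynomial.natDegree_sum_le_of_forall_le _ _ fun i hi => ?_
        rw [Polynomial.natDegree_X_pow]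
        exact Nat.pow_le_pow_right (by omega) (by
          have := Finset.mem_range.mp hi; omega)
      have h2 : q ^ (n - 1) < q ^ n := Nat.pow_lt_pow_right (by omega) (by omega)
      rw [hF]; omega
    have hP0 : P = 0 :=
      Polynomial.eq_zero_of_natDegree_lt_card_of_eval_eq_zero P Function.injective_id
        (fun x => hPeval x) hPdeg
    have hc1 : P.coeff 1 = 1 := by
      rw [hPdef, Polynomial.finset_sum_coeff]
      have : ∀ i ∈ Finset.range n, (Polynomial.X ^ q ^ i : Polynomial F).coeff 1
          = if i = 0 then 1 else 0 := by
        intro i _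
        rw [Polynomial.coeff_X_pow]
        by_cases hi : i = 0
        · subst hi; simp
        · rw [if_neg hi, if_neg]
          intro h1
          have : 2 ≤ q ^ i := by
            calc 2 ≤ q := hq2
            _ = q ^ 1 := (pow_one q).symm
            _ ≤ q ^ i := Nat.pow_le_pow_right (by omega) (by omega)
          omega
      rw [Finset.sum_congr rfl this, Finset.sum_ite_eq' (Finset.range n) 0 (fun _ => (1:F))]
      rw [if_pos (Finset.mem_range.mpr (by omega))]
    rw [hP0] at hc1
    simp at hc1
  -- every solution of y^q = y lies in the image of K
  have hfix : ∀ y : F, y ^ q = y → ∃ c : K, algebraMap K F c = y := by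
    intro y hy
    by_contra hc
    push_neg at hc
    set f : Polynomial F := Polynomial.X ^ q - Polynomial.X with hfdef
    have hfd : f.natDegree = q := by
      have hlt : (Polynomial.X : Polynomial F).natDegree
          < (Polynomial.X ^ q : Polynomial F).natDegree := by
        rw [Polynomial.natDegree_X_pow, Polynomial.natDegree_X]; omega
      rw [hfdef, Polynomial.natDegree_sub_eq_left_of_natDegree_lt hlt, Polynomial.natDegree_X_pow]
    have hf0 : f ≠ 0 := by
      intro h0
      rw [h0, Polynomial.natDegree_zero] at hfd
      omega
    set s : Finset F := (Finset.univ.image (algebraMap K F)) ∪ {y} with hsdef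
    have hsub : s ⊆ f.roots.toFinset := by
      intro z hz
      rw [Multiset.mem_toFinset, Polynomial.mem_roots hf0]
      have hzq : z ^ q = z := by
        rcases Finset.mem_union.mp hz with h | h
        · obtain ⟨c, _, rfl⟩ := Finset.mem_image.mp h
          rw [← map_pow, hKq c]
        · rw [Finset.mem_singleton] at h
          subst h; exact hy
      simp [hfdef, Polynomial.IsRoot, hzq]
    have hdisj : Disjoint (Finset.univ.image (algebraMap K F)) ({y} : Finset F) := by
      rw [Finset.disjoint_singleton_right]
      intro hmem
      obtain ⟨c, _, hcy⟩ := Finset.mem_image.mp hmem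
      exact hc c hcy
    have hscard : s.card = q + 1 := by
      rw [hsdef, Finset.card_union_of_disjoint hdisj,
        Finset.card_image_of_injective _ (algebraMap K F).injective,
        Finset.card_univ, hK, Finset.card_singleton]
    have : q + 1 ≤ q := by
      calc q + 1 = s.card := hscard.symm
      _ ≤ f.roots.toFinset.card := Finset.card_le_card hsub
      _ ≤ Multiset.card f.roots := Multiset.toFinset_card_le _
      _ ≤ f.natDegree := Polynomial.card_roots' f
      _ = q := hfd
    omega
  -- T x is fixed by the Frobenius x ↦ x^q
  have hTfix : ∀ x : F, (T x) ^ q = T x := by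
    intro x
    have h1 : (T x) ^ q = ∑ i ∈ Finset.range n, x ^ q ^ (i + 1) := by
      have hφ : ∀ y : F, iterateFrobenius F p k y = y ^ q := by
        intro y; rw [iterateFrobenius_def, hq']
      rw [hTapp, ← hφ, map_sum]
      refine Finset.sum_congr rfl fun i _ => ?_
      rw [hφ, ← pow_mul, ← pow_succ]
    have e1 := Finset.sum_range_succ' (fun i => x ^ q ^ i) n
    have e2 := Finset.sum_range_succ (fun i => x ^ q ^ i) n
    simp only [pow_zero, pow_one] at e1
    rw [hxqn x] at e2
    rw [h1, hTapp]
    have := e1.symm.trans e2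
    exact add_right_cancel this
  -- range T is contained in the image of K
  have hle : LinearMap.range T ≤ LinearMap.range (Algebra.linearMap K F) := by
    rintro _ ⟨x, rfl⟩
    obtain ⟨c, hcx⟩ := hfix (T x) (hTfix x)
    exact ⟨c, hcx⟩
  -- finrank computations
  have hfrR : Module.finrank K (LinearMap.range (Algebra.linearMap K F)) = 1 := by
    rw [LinearMap.finrank_range_of_inj
      (show Function.Injective ⇑(Algebra.linearMap K F) from (algebraMap K F).injective)]
    exact Module.finrank_self K
  have hrT1 : Module.finrank K (LinearMap.range T) = 1 := by
    refine le_antisymm (hfrR ▸ Submodule.finrank_mono hle) ?_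
    rw [Nat.one_le_iff_ne_zero]
    intro h0
    have : LinearMap.range T = ⊥ := Submodule.finrank_eq_zero.mp h0
    obtain ⟨x₀, hx₀⟩ := hTne
    exact hx₀ (by
      have : T x₀ ∈ (⊥ : Submodule K F) := this ▸ LinearMap.mem_range_self T x₀
      simpa using this)
  have hWrank : Module.finrank K (LinearMap.ker T) = n - 1 := by
    have h := LinearMap.finrank_range_add_finrank_ker T
    rw [hrT1, hrank] at h
    omega
  have hQ : Module.finrank K (F ⧸ U) = 1 := by
    have h := Submodule.finrank_quotient_add_finrank U
    rw [hd, hrank] at h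
    omega
  -- the pairing map and an element δ with δ • ker T = U
  let L : F →ₗ[K] (LinearMap.ker T →ₗ[K] F ⧸ U) :=
    LinearMap.mk₂ K (fun δ (w : LinearMap.ker T) => Submodule.Quotient.mk (δ * (w : F)))
      (fun δ₁ δ₂ w => by
        simp only [add_mul]; exact Submodule.Quotient.mk_add U)
      (fun c δ w => by
        simp only [smul_mul_assoc]; exact Submodule.Quotient.mk_smul U _ _)
      (fun δ w₁ w₂ => by
        simp only [Submodule.coe_add, mul_add]; exact Submodule.Quotient.mk_add U)
      (fun c δ w => by
        simp only [SetLike.val_smul, mul_smul_comm]; exact Submodule.Quotient.mk_smul U _ _)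
  have hLker : LinearMap.ker L ≠ ⊥ := by
    intro hker
    have hinj : Function.Injective L := LinearMap.ker_eq_bot.mp hker
    have hfin := LinearMap.finrank_le_finrank_of_injective hinj
    rw [hrank, Module.finrank_linearMap, hWrank, hQ] at hfin
    omega
  obtain ⟨δ, hδker, hδ0⟩ := (Submodule.ne_bot_iff _).mp hLker
  have hδU : ∀ w : F, w ∈ LinearMap.ker T → δ * w ∈ U := by
    intro w hw
    have hL0 : L δ = 0 := hδker
    have h2 := LinearMap.congr_fun hL0 (⟨w, hw⟩ : LinearMap.ker T)
    simpa [L, Submodule.Quotient.mk_eq_zero] using h2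
  have hmapU : Submodule.map (LinearMap.mulLeft K δ) (LinearMap.ker T) = U := by
    have hmle : Submodule.map (LinearMap.mulLeft K δ) (LinearMap.ker T) ≤ U := by
      rintro _ ⟨w, hw, rfl⟩
      rw [LinearMap.mulLeft_apply]
      exact hδU w hw
    have hinj : Function.Injective ⇑(LinearMap.mulLeft K δ) := by
      intro x y hxy
      rw [LinearMap.mulLeft_apply, LinearMap.mulLeft_apply] at hxy
      exact mul_left_cancel₀ hδ0 hxy
    have hreq : Module.finrank K
        (Submodule.map (LinearMap.mulLeft K δ) (LinearMap.ker T)) = n - 1 := by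
      rw [← LinearEquiv.finrank_eq (Submodule.equivMapOfInjective _ hinj (LinearMap.ker T))]
      exact hWrank
    exact Submodule.eq_of_le_of_finrank_le hmle (by rw [hd, hreq])
  have hkerset : ((LinearMap.ker T : Submodule K F) : Set F) = Wset := by
    ext x
    simp only [SetLike.mem_coe, LinearMap.mem_ker, hWsetdef, Set.mem_setOf_eq, hTapp]
  have hUset : (U : Set F) = (fun x => δ * x) '' Wset := by
    rw [← hmapU, Submodule.map_coe, hkerset]
    ext z
    simp only [Set.mem_image, LinearMap.mulLeft_apply]
  -- decompose δ as a² ε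
  have hchar2 : ringChar F ≠ 2 := by
    intro h2
    have hpq : p ∣ q := hq' ▸ dvd_pow_self p (by omega)
    rw [← hPeq] at h2
    rw [h2] at hpq
    rw [Nat.odd_iff] at hqodd
    omega
  have hδdecomp : ∃ a : F, a ≠ 0 ∧ ∃ ε ∈ ({1, lam} : Set F), δ = a ^ 2 * ε := by
    rcases FiniteField.pow_dichotomy hchar2 hδ0 with h1 | h2
    · obtain ⟨r, hr⟩ := (FiniteField.isSquare_iff hchar2 hδ0).mpr h1
      refine ⟨r, ?_, 1, by simp, by rw [mul_one, sq, ← hr]⟩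
      rintro rfl
      rw [mul_zero] at hr
      exact hδ0 hr
    · have hlm : lam ^ (Fintype.card F / 2) = -1 := by
        rcases FiniteField.pow_dichotomy hchar2 hlam with h | h
        · exfalso
          obtain ⟨r, hr⟩ := (FiniteField.isSquare_iff hchar2 hlam).mpr h
          exact hlamns r (by rw [sq, ← hr])
        · exact h
      have hz : δ * lam⁻¹ ≠ 0 := mul_ne_zero hδ0 (inv_ne_zero hlam)
      have hsq1 : (δ * lam⁻¹) ^ (Fintype.card F / 2) = 1 := by
        rw [mul_pow, h2, inv_pow, hlm]
        norm_num
      obtain ⟨r, hr⟩ := (FiniteField.isSquare_iff hchar2 hz).mpr hsq1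
      have hr0 : r ≠ 0 := by
        rintro rfl
        rw [mul_zero] at hr
        exact hz hr
      refine ⟨r, hr0, lam, by simp, ?_⟩
      have : δ * lam⁻¹ * lam = r * r * lam := by rw [← hr]
      rw [inv_mul_cancel_right₀ hlam] at this
      rw [this, sq]
  obtain ⟨a, ha, ε, hε, hδeq⟩ := hδdecomp
  have hε0 : ε ≠ 0 := by
    rcases hε with h | h
    · rw [h]; exact one_ne_zero
    · rw [h]; exact hlam
  refine ⟨a, ha, ε, hε, ?_, ?_⟩
  · rw [hUset, hδeq]
  · -- graph isomorphism
    have hmem : ∀ (c : F), c ≠ 0 → ∀ z : F,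
        (z ∈ (fun x => c * x) '' Wset ↔ c⁻¹ * z ∈ Wset) := by
      intro c hc z
      constructor
      · rintro ⟨w, hw, rfl⟩
        rwa [inv_mul_cancel_left₀ hc]
      · intro hzin
        exact ⟨c⁻¹ * z, hzin, by show c * (c⁻¹ * z) = z; rw [mul_inv_cancel_left₀ hc]⟩
    have haε : a ^ 2 * ε ≠ 0 := mul_ne_zero (pow_ne_zero 2 ha) hε0
    have ha' : a⁻¹ ≠ 0 := inv_ne_zero ha
    refine ⟨⟨Equiv.mulLeft₀ a⁻¹ ha', ?_⟩⟩
    intro x y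
    show (a⁻¹ * x ≠ a⁻¹ * y ∧ (a⁻¹ * x) * (a⁻¹ * y) ∈ (fun x => ε * x) '' Wset)
      ↔ (x ≠ y ∧ x * y ∈ (U : Set F))
    have h1 : (a⁻¹ * x ≠ a⁻¹ * y) ↔ x ≠ y := by
      constructor
      · intro h hxy; exact h (by rw [hxy])
      · intro h hxy; exact h (mul_left_cancel₀ ha' hxy)
    have h2 : ((a⁻¹ * x) * (a⁻¹ * y) ∈ (fun x => ε * x) '' Wset) ↔ (x * y ∈ (U : Set F)) := by
      rw [hmem ε hε0, hUset, hδeq, hmem _ (by rw [← hδeq]; exact hδ0)]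
      have : ε⁻¹ * (a⁻¹ * x * (a⁻¹ * y)) = (a ^ 2 * ε)⁻¹ * (x * y) := by
        rw [mul_inv, sq, mul_inv]
        ring
      rw [this]
    rw [h1, h2]
end

section
/- Let q be an odd prime power, n ≥ 2, and λ ∈ F_{q^n} with λ ≠ 0. Then there exists an invertible F_q-linear map T : F_{q^n} → F_{q^n} such that Tr_n(λxy) = Tr_n(T(x)·T(y)) for all x, y ∈ F_{q^n} if and only if λ is a square in F_{q^n}. -/
open Finset

section Aux

variable {q n : ℕ} {K F : Type*} [Field K] [Field F] [Algebra K F] [Fintype K] [Fintype F]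

/-- Trace and norm of a finite field extension as explicit power sums/products. -/
lemma finite_field_trace_norm (hq : 2 ≤ q) (hn : 1 ≤ n)
    (hK : Fintype.card K = q) (hF : Fintype.card F = q ^ n) :
    (∀ x : F, algebraMap K F (Algebra.trace K F x) = ∑ i ∈ Finset.range n, x ^ q ^ i) ∧
    (∀ x : F, algebraMap K F (Algebra.norm K x) = ∏ i ∈ Finset.range n, x ^ q ^ i) := by
  obtain ⟨p, hp⟩ := CharP.exists K
  haveI : CharP K p := hp
  haveI hpp : Fact p.Prime := ⟨(CharP.char_is_prime K p)⟩
  haveI : CharP F p := charP_of_injective_algebraMap' K p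
  obtain ⟨d, -, hd⟩ := FiniteField.card K p
  rw [hK] at hd
  -- the Frobenius x ↦ x^q as a K-algebra equivalence of F
  let φ : F →ₐ[K] F :=
    { toRingHom := iterateFrobenius F p d
      commutes' := fun c => by
        show iterateFrobenius F p (d : ℕ) ((algebraMap K F) c) = (algebraMap K F) c
        rw [iterateFrobenius_def, ← hd, ← map_pow, ← hK, FiniteField.pow_card] }
  have hφ : ∀ x : F, φ x = x ^ q := fun x => by
    show iterateFrobenius F p d x = x ^ q
    rw [iterateFrobenius_def, ← hd]
  let frob : F ≃ₐ[K] F := AlgEquiv.ofBijective φ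
    ((Finite.injective_iff_bijective).mp (φ.toRingHom.injective))
  have hfrob : ∀ x : F, frob x = x ^ q := hφ
  have hpow : ∀ (i : ℕ) (x : F), (frob ^ i) x = x ^ q ^ i := by
    intro i
    induction i with
    | zero => intro x; simp
    | succ i ih =>
      intro x
      rw [pow_succ', AlgEquiv.mul_apply, ih, hfrob, ← pow_mul, pow_succ]
  have hfn : frob ^ n = 1 := by
    apply AlgEquiv.ext
    intro x
    rw [hpow, AlgEquiv.one_apply, ← hF, FiniteField.pow_card]
  -- the order of frob is n
  have hnord : orderOf frob = n := by
    have hdvd : orderOf frob ∣ n := orderOf_dvd_of_pow_eq_one hfn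
    set m := orderOf frob with hm
    have hmn : m ≤ n := Nat.le_of_dvd (by omega) hdvd
    have hfm : frob ^ m = 1 := pow_orderOf_eq_one frob
    have hmpos : 0 < m := by
      haveI : FiniteDimensional K F := inferInstance
      exact orderOf_pos frob
    -- every x satisfies x^(q^m) = x
    have hall : ∀ x : F, x ^ q ^ m = x := fun x => by rw [← hpow m x, hfm]; rfl
    obtain ⟨g, hg⟩ := IsCyclic.exists_generator (α := Fˣ)
    have hog : orderOf g = q ^ n - 1 := by
      rw [orderOf_eq_card_of_forall_mem_zpowers hg, Nat.card_units, Nat.card_eq_fintype_card, hF]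
    have hgm : g ^ (q ^ m - 1) = 1 := by
      have h1 : (g : F) ^ q ^ m = (g : F) := hall g
      have h2 : g ^ q ^ m = g := Units.ext (by push_cast; exact h1)
      have hq1 : 1 ≤ q ^ m := Nat.one_le_pow _ _ (by omega)
      have : g ^ (q ^ m - 1) * g = g := by
        rw [← pow_succ, Nat.sub_add_cancel hq1, h2]
      calc g ^ (q ^ m - 1) = g ^ (q ^ m - 1) * g * g⁻¹ := by group
        _ = g * g⁻¹ := by rw [this]
        _ = 1 := mul_inv_cancel g
    have hdvd2 : q ^ n - 1 ∣ q ^ m - 1 := hog ▸ orderOf_dvd_of_pow_eq_one hgm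
    have hqm2 : 2 ≤ q ^ m := le_trans hq (Nat.le_self_pow (by omega) q)
    have hle : q ^ n - 1 ≤ q ^ m - 1 := Nat.le_of_dvd (by omega) hdvd2
    have hqn1 : 1 ≤ q ^ n := Nat.one_le_pow _ _ (by omega)
    have : q ^ n ≤ q ^ m := by omega
    have : n ≤ m := (Nat.pow_le_pow_iff_right hq).mp this
    omega
  -- the Galois group has cardinality n
  have hfr : Module.finrank K F = n := by
    have := Module.card_eq_pow_finrank (K := K) (V := F)
    rw [hK, hF] at this
    exact (Nat.pow_right_injective hq this.symm)
  have hcardG : Fintype.card (F ≃ₐ[K] F) = n := by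
    rw [← Nat.card_eq_fintype_card, IsGalois.card_aut_eq_finrank, hfr]
  -- bijection Fin n ≃ Galois group
  have hbij : Function.Bijective (fun i : Fin n => frob ^ (i : ℕ)) := by
    rw [Fintype.bijective_iff_injective_and_card, Fintype.card_fin, hcardG]
    refine ⟨fun i j hij => ?_, rfl⟩
    have := pow_injOn_Iio_orderOf (x := frob)
      (by rw [hnord]; exact Set.mem_Iio.mpr i.2) (by rw [hnord]; exact Set.mem_Iio.mpr j.2) hij
    exact Fin.ext this
  constructor
  · intro x
    rw [trace_eq_sum_automorphisms]
    rw [← Fintype.sum_bijective _ hbij _ (fun σ => σ x) (fun i => rfl)]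
    rw [← Fin.sum_univ_eq_sum_range (fun i => x ^ q ^ i) n]
    exact Finset.sum_congr rfl (fun i _ => hpow i x)
  · intro x
    rw [Algebra.norm_eq_prod_automorphisms]
    rw [← Fintype.prod_bijective _ hbij _ (fun σ => σ x) (fun i => rfl)]
    rw [← Fin.prod_univ_eq_prod_range (fun i => x ^ q ^ i) n]
    exact Finset.prod_congr rfl (fun i _ => hpow i x)

end Aux

/-- for `q` odd and `λ ∈ F_{q^n}` nonzero, there exists an invertible
`F_q`-linear map `T : F_{q^n} → F_{q^n}` with `Tr_n(λxy) = Tr_n(T(x)·T(y))` for all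
`x, y` (where `Tr_n(a) = ∑_{i<n} a^(q^i)`) if and only if `λ` is a square in
`F_{q^n}`. -/
theorem trace_form_equivalent_iff_square (q n : ℕ)
    (hq : IsPrimePow q) (hqodd : Odd q) (hn : 2 ≤ n)
    (K F : Type*) [Field K] [Field F] [Algebra K F] [Fintype K] [Fintype F]
    (hK : Fintype.card K = q) (hF : Fintype.card F = q ^ n)
    (lam : F) (hlam : lam ≠ 0) :
    (∃ T : F ≃ₗ[K] F, ∀ x y : F,
      ∑ i ∈ Finset.range n, (lam * x * y) ^ q ^ i =
        ∑ i ∈ Finset.range n, (T x * T y) ^ q ^ i) ↔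
    (∃ b : F, b ^ 2 = lam) := by
  have hq2 : 2 ≤ q := hq.two_le
  obtain ⟨htr, hnorm⟩ := finite_field_trace_norm (q := q) (n := n) (K := K) (F := F)
    hq2 (by omega) hK hF
  constructor
  · rintro ⟨T, hT⟩
    -- translate to a trace identity over K
    have htrK : ∀ x y : F, Algebra.trace K F (lam * x * y) = Algebra.trace K F (T x * T y) := by
      intro x y
      apply (algebraMap K F).injective
      rw [htr, htr]
      exact hT x y
    -- matrix / determinant argument
    let b := Module.finBasis K F
    let B1 : LinearMap.BilinForm K F := Algebra.traceForm K F
    have heq : B1.comp ((Algebra.lmul K F) lam) LinearMap.id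
        = B1.comp T.toLinearMap T.toLinearMap := by
      ext x y
      simp only [LinearMap.compl₁₂_apply, LinearMap.id_coe, id_eq, LinearEquiv.coe_coe,
        LinearMap.BilinForm.comp_apply]
      exact htrK x y
    have hmat := congrArg (fun B => ((LinearMap.BilinForm.toMatrix b) B).det) heq
    simp only [BilinForm.toMatrix_comp b b, LinearMap.toMatrix_id,
      Matrix.det_mul, Matrix.det_transpose, Matrix.det_one] at hmat
    set G := LinearMap.BilinForm.toMatrix b B1 with hG
    have hGdet : G.det ≠ 0 := by
      rw [← LinearMap.BilinForm.nondegenerate_iff_det_ne_zero b]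
      exact traceForm_nondegenerate K F
    set M := LinearMap.toMatrix b b T.toLinearMap
    set L := LinearMap.toMatrix b b ((Algebra.lmul K F) lam)
    have hdet : L.det = M.det ^ 2 := by
      have h1 : L.det * G.det = M.det ^ 2 * G.det := by
        rw [sq]
        have : L.det * G.det * 1 = M.det * G.det * M.det := hmat
        rw [mul_one] at this
        rw [this]; ring
      exact mul_right_cancel₀ hGdet h1
    have hLnorm : Algebra.norm K lam = L.det := Algebra.norm_eq_matrix_det b lam
    have hsq : IsSquare (Algebra.norm K lam) := by
      rw [hLnorm, hdet, sq]; exact ⟨M.det, rfl⟩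
    -- character arguments
    have hqnodd : Odd (q ^ n) := hqodd.pow
    have hcharK : ringChar K ≠ 2 := by
      intro h2
      have := FiniteField.even_card_of_char_two h2
      rw [hK] at this
      have h3 : q % 2 = 0 := this
      have h4 : q % 2 = 1 := Nat.odd_iff.mp hqodd
      omega
    have hcharF : ringChar F ≠ 2 := by
      intro h2
      have := FiniteField.even_card_of_char_two h2
      rw [hF] at this
      have h3 : q ^ n % 2 = 0 := this
      have h4 : q ^ n % 2 = 1 := Nat.odd_iff.mp hqnodd
      omega
    have hnz : Algebra.norm K lam ≠ 0 := by
      rw [Algebra.norm_ne_zero_iff]; exact hlam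
    have h1 : (Algebra.norm K lam) ^ (Fintype.card K / 2) = 1 :=
      (FiniteField.isSquare_iff hcharK hnz).mp hsq
    -- compute the exponent
    set s : ℕ := ∑ i ∈ Finset.range n, q ^ i with hs
    have hmap : algebraMap K F (Algebra.norm K lam) = lam ^ s := by
      rw [hnorm lam, hs, ← Finset.prod_pow_eq_pow_sum]
    have h2 : lam ^ (s * (q / 2)) = 1 := by
      have := congrArg (algebraMap K F) h1
      rw [map_pow, hmap, map_one, ← pow_mul, hK] at this
      exact this
    have hq1 : 1 ≤ q := by omega
    have hqn1 : 1 ≤ q ^ n := Nat.one_le_pow _ _ (by omega)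
    have hgeom : s * (q - 1) = q ^ n - 1 := by
      have hz := geom_sum_mul (q : ℤ) n
      have : (s : ℤ) * ((q : ℤ) - 1) = (q : ℤ) ^ n - 1 := by
        rw [hs]; push_cast; exact hz
      have h3 : (s : ℤ) * ((q : ℤ) - 1) = ((s * (q - 1) : ℕ) : ℤ) := by
        push_cast [Nat.cast_sub hq1]; ring
      have h4 : ((s * (q - 1) : ℕ) : ℤ) = ((q ^ n - 1 : ℕ) : ℤ) := by
        rw [← h3, this]; push_cast [Nat.cast_sub hqn1]; ring
      exact_mod_cast h4
    have hqodd' : q % 2 = 1 := Nat.odd_iff.mp hqodd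
    have hqnodd' : q ^ n % 2 = 1 := Nat.odd_iff.mp hqnodd
    have hexp : s * (q / 2) = Fintype.card F / 2 := by
      rw [hF]
      have e1 : s * (q / 2) * 2 = s * (q - 1) := by
        rw [mul_assoc]
        congr 1
        omega
      rw [hgeom] at e1
      omega
    rw [hexp] at h2
    have : IsSquare lam := (FiniteField.isSquare_iff hcharF hlam).mpr h2
    obtain ⟨c, hc⟩ := this
    exact ⟨c, by rw [sq, ← hc]⟩
  · rintro ⟨c, hc⟩
    have hc0 : c ≠ 0 := by
      intro h; rw [h] at hc; simp at hc; exact hlam hc.symm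
    refine ⟨LinearEquiv.ofLinear ((Algebra.lmul K F) c) ((Algebra.lmul K F) c⁻¹) ?_ ?_, ?_⟩
    · ext x
      show c * (c⁻¹ * x) = x
      rw [← mul_assoc, mul_inv_cancel₀ hc0, one_mul]
    · ext x
      show c⁻¹ * (c * x) = x
      rw [← mul_assoc, inv_mul_cancel₀ hc0, one_mul]
    · intro x y
      apply Finset.sum_congr rfl
      intro i _
      congr 1
      show lam * x * y = (c * x) * (c * y)
      rw [← hc]; ring
end

section
/- Let q be a prime power and n ≥ 2 an integer such that q > 2 or n ≥ 6, with q even or n odd, and let U ⊊ F_{q^n} be an F_q-linear subspace of dimension d_U = n − 1. Then ω(G_U) = q^{⌊n/2⌋} + n − 2·⌊n/2⌋ (i.e., ω(G_U) = q^{n/2} if n is even, and ω(G_U) = q^{(n−1)/2} + 1 if n is odd). -/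
open Module Submodule LinearMap
open LinearMap.BilinForm

/-! ### Arithmetic lemmas -/

lemma arith_q3 (q k j : ℕ) (hq : 3 ≤ q) : q ^ k + 2 * j ≤ q ^ (k + j) := by
  induction j with
  | zero => simp
  | succ j ih =>
    have h1 : 1 ≤ q ^ (k + j) := Nat.one_le_pow _ _ (by omega)
    have h2 : q ^ (k + j) * 3 ≤ q ^ (k + j) * q := Nat.mul_le_mul_left _ hq
    have h3 : q ^ (k + (j+1)) = q ^ (k + j) * q := by ring
    omega

lemma arith_2 (k j : ℕ) (h : 3 ≤ k + j) : 2 ^ k + 2 * j ≤ 2 ^ (k + j) := by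
  induction j with
  | zero => simp
  | succ j ih =>
    by_cases hkj : 3 ≤ k + j
    · have h1 := ih hkj
      have h2 : 2 ^ 3 ≤ 2 ^ (k + j) := Nat.pow_le_pow_right (by norm_num) hkj
      have h3 : 2 ^ (k + (j + 1)) = 2 * 2 ^ (k + j) := by ring
      omega
    · have hk : k ≤ 2 := by omega
      interval_cases k
      · have hj : j = 2 := by omega
        subst hj; norm_num
      · have hj : j = 1 := by omega
        subst hj; norm_num
      · have hj : j = 0 := by omega
        subst hj; norm_num

lemma arith_main (q n k : ℕ) (hq2 : 2 ≤ q) (h : 3 ≤ q ∨ 6 ≤ n) (hk : k + k ≤ n) :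
    q ^ k + (n - 2 * k) ≤ q ^ (n / 2) + n - 2 * (n / 2) := by
  have hkm : k ≤ n / 2 := by omega
  have key : q ^ k + 2 * (n / 2 - k) ≤ q ^ (n / 2) := by
    by_cases h3 : 3 ≤ q
    · have := arith_q3 q k (n / 2 - k) h3
      rwa [Nat.add_sub_cancel' hkm] at this
    · have hq : q = 2 := by omega
      subst hq
      have := arith_2 k (n / 2 - k) (by omega)
      rwa [Nat.add_sub_cancel' hkm] at this
  have h1 : 1 ≤ q ^ (n / 2) := Nat.one_le_pow _ _ (by omega)
  omega

/-! ### Bilinear form lemmas -/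

section Bilin

universe u
variable {K : Type*} [Field K] {V : Type u} [AddCommGroup V] [Module K V]

lemma restrict_pair_nondeg (B : LinearMap.BilinForm K V) (hB : B.IsRefl)
    {u v : V} (huv : B u v ≠ 0) (hvv : B v v = 0) :
    (B.restrict ((K ∙ u) ⊔ (K ∙ v))).Nondegenerate := by
  refine (LinearMap.IsRefl.nondegenerate_iff_separatingLeft
    (B := B.restrict ((K ∙ u) ⊔ (K ∙ v))) (fun x y h => hB x y h)).mpr ?_
  intro m hm
  obtain ⟨x, hx, y, hy, hxy⟩ := mem_sup.mp m.2
  obtain ⟨a, rfl⟩ := mem_span_singleton.mp hx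
  obtain ⟨b, rfl⟩ := mem_span_singleton.mp hy
  have h1 := hm ⟨v, mem_sup_right (mem_span_singleton_self v)⟩
  have h2 := hm ⟨u, mem_sup_left (mem_span_singleton_self u)⟩
  replace h1 : B (m : V) v = 0 := h1
  replace h2 : B (m : V) u = 0 := h2
  rw [← hxy] at h1 h2
  have hvu : B v u ≠ 0 := fun hz => huv (hB v u hz)
  have e1 : B (a • u + b • v) v = a * B u v + b * B v v := by
    simp [map_add, map_smul, smul_eq_mul]
  have e2 : B (a • u + b • v) u = a * B u u + b * B v u := by
    simp [map_add, map_smul, smul_eq_mul]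
  rw [e1, hvv, mul_zero, add_zero] at h1
  have ha : a = 0 := by
    rcases mul_eq_zero.mp h1 with h | h
    · exact h
    · exact absurd h huv
  rw [e2, ha, zero_mul, zero_add] at h2
  have hb : b = 0 := by
    rcases mul_eq_zero.mp h2 with h | h
    · exact h
    · exact absurd h hvu
  ext
  simp [← hxy, ha, hb]

end Bilin

section Bilin2

universe u
variable {K : Type*} [Field K] {V : Type u} [AddCommGroup V] [Module K V]

lemma mem_orth {B : LinearMap.BilinForm K V} {P : Submodule K V} {x : V}
    (hx : x ∈ B.orthogonal P) {p : V} (hp : p ∈ P) : B p x = 0 := hx p hp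

lemma descent [FiniteDimensional K V] (B : LinearMap.BilinForm K V) (hB : B.IsRefl)
    {u v : V} (huv : B u v ≠ 0) (hvv : B v v = 0)
    (W' : Submodule K ↥(B.orthogonal ((K ∙ u) ⊔ (K ∙ v))))
    (hW' : ∀ x ∈ W', ∀ y ∈ W',
      (B.restrict (B.orthogonal ((K ∙ u) ⊔ (K ∙ v)))) x y = 0) :
    ∃ W : Submodule K V, (∀ x ∈ W, ∀ y ∈ W, B x y = 0) ∧
      finrank K W = finrank K W' + 1 := by
  have hvP : v ∈ (K ∙ u) ⊔ (K ∙ v) :=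
    Submodule.mem_sup_right (Submodule.mem_span_singleton_self v)
  have huP : u ∈ (K ∙ u) ⊔ (K ∙ v) :=
    Submodule.mem_sup_left (Submodule.mem_span_singleton_self u)
  have hv0 : v ≠ 0 := by rintro rfl; simp at huv
  have hvO : v ∉ B.orthogonal ((K ∙ u) ⊔ (K ∙ v)) := fun hvo => huv (hvo u huP)
  refine ⟨(K ∙ v) ⊔ Submodule.map (B.orthogonal ((K ∙ u) ⊔ (K ∙ v))).subtype W', ?_, ?_⟩
  · intro x hx y hy
    obtain ⟨x1, hx1, x2, hx2, rfl⟩ := Submodule.mem_sup.mp hx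
    obtain ⟨y1, hy1, y2, hy2, rfl⟩ := Submodule.mem_sup.mp hy
    obtain ⟨a, rfl⟩ := Submodule.mem_span_singleton.mp hx1
    obtain ⟨b, rfl⟩ := Submodule.mem_span_singleton.mp hy1
    obtain ⟨x', hx', rfl⟩ := Submodule.mem_map.mp hx2
    obtain ⟨y', hy', rfl⟩ := Submodule.mem_map.mp hy2
    have e1 : B v (y' : V) = 0 := mem_orth y'.2 hvP
    have e2 : B (x' : V) v = 0 := hB v _ (mem_orth x'.2 hvP)
    have e3 : B (x' : V) (y' : V) = 0 := hW' x' hx' y' hy'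
    simp [map_add, map_smul, smul_eq_mul, hvv, e1, e2, e3]
  · have hdisj : Disjoint (K ∙ v)
        (Submodule.map (B.orthogonal ((K ∙ u) ⊔ (K ∙ v))).subtype W') := by
      rw [disjoint_comm, Submodule.disjoint_span_singleton' hv0]
      intro hvm
      exact hvO (Submodule.map_subtype_le _ W' hvm)
    have h1 := Submodule.finrank_sup_add_finrank_inf_eq (K ∙ v)
      (Submodule.map (B.orthogonal ((K ∙ u) ⊔ (K ∙ v))).subtype W')
    rw [hdisj.eq_bot, finrank_bot, add_zero, finrank_span_singleton hv0,
      Submodule.finrank_map_subtype_eq] at h1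
    omega

lemma restrict_orthogonal_nondeg [FiniteDimensional K V] (B : LinearMap.BilinForm K V)
    (hB : B.IsRefl) (hnd : B.Nondegenerate) {P : Submodule K V}
    (hc : IsCompl P (B.orthogonal P)) :
    (B.restrict (B.orthogonal P)).Nondegenerate := by
  refine (LinearMap.IsRefl.nondegenerate_iff_separatingLeft
    (B := B.restrict (B.orthogonal P)) (fun x y h => hB x y h)).mpr ?_
  intro m hm
  have hall : ∀ y : V, B (m : V) y = 0 := by
    intro y
    have hy : y ∈ P ⊔ B.orthogonal P := by rw [hc.sup_eq_top]; trivial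
    obtain ⟨p, hp, o, ho, rfl⟩ := Submodule.mem_sup.mp hy
    have e1 : B (m : V) p = 0 := hB p _ (mem_orth m.2 hp)
    have e2 : B (m : V) o = 0 := hm ⟨o, ho⟩
    simp [map_add, e1, e2]
  exact Subtype.ext (hnd.1 (m : V) hall)

lemma pair_finranks [FiniteDimensional K V] {B : LinearMap.BilinForm K V}
    {u v : V} (huv : B u v ≠ 0) :
    1 ≤ finrank K ((K ∙ u) ⊔ (K ∙ v) : Submodule K V) ∧
      finrank K ((K ∙ u) ⊔ (K ∙ v) : Submodule K V) ≤ 2 := by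
  have hv0 : v ≠ 0 := by rintro rfl; simp at huv
  have hu0 : u ≠ 0 := by rintro rfl; simp at huv
  have hvP : v ∈ (K ∙ u) ⊔ (K ∙ v) :=
    Submodule.mem_sup_right (Submodule.mem_span_singleton_self v)
  constructor
  · by_contra hc
    have h0 : finrank K ((K ∙ u) ⊔ (K ∙ v) : Submodule K V) = 0 := by omega
    rw [Submodule.finrank_eq_zero] at h0
    rw [h0] at hvP
    exact hv0 hvP
  · have h1 := Submodule.finrank_sup_add_finrank_inf_eq (K ∙ u) (K ∙ v)
    rw [finrank_span_singleton hu0, finrank_span_singleton hv0] at h1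
    omega

/-- Greedy construction of a large totally isotropic subspace for an alternating form. -/
lemma exists_isotropic_alt (d : ℕ) :
    ∀ (V : Type u) [AddCommGroup V] [Module K V] [FiniteDimensional K V]
      (B : LinearMap.BilinForm K V), B.IsAlt → Module.finrank K V ≤ d →
      ∃ W : Submodule K V, (∀ x ∈ W, ∀ y ∈ W, B x y = 0) ∧
        Module.finrank K V ≤ 2 * Module.finrank K W := by
  induction d with
  | zero =>
    intro V _ _ _ B _ h0
    exact ⟨⊥, by simp, by omega⟩
  | succ d ih =>
    intro V _ _ _ B hAlt hle
    by_cases hz : ∀ x y : V, B x y = 0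
    · refine ⟨⊤, fun x _ y _ => hz x y, ?_⟩
      rw [finrank_top]
      omega
    · push_neg at hz
      obtain ⟨u, v, huv⟩ := hz
      have hvv : B v v = 0 := hAlt v
      have hres := restrict_pair_nondeg B hAlt.isRefl huv hvv
      have hcompl := LinearMap.BilinForm.isCompl_orthogonal_of_restrict_nondegenerate
        hAlt.isRefl hres
      have halt' : (B.restrict (B.orthogonal ((K ∙ u) ⊔ (K ∙ v)))).IsAlt :=
        fun x => hAlt (x : V)
      have hfr : finrank K ((K ∙ u) ⊔ (K ∙ v) : Submodule K V) +
          finrank K (B.orthogonal ((K ∙ u) ⊔ (K ∙ v))) = finrank K V :=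
        Submodule.finrank_add_eq_of_isCompl hcompl
      obtain ⟨hP1, hP2⟩ := pair_finranks huv
      obtain ⟨W', hW'iso, hW'fr⟩ := ih ↥(B.orthogonal ((K ∙ u) ⊔ (K ∙ v)))
        (B.restrict (B.orthogonal ((K ∙ u) ⊔ (K ∙ v)))) halt' (by omega)
      obtain ⟨W, hiso, hWfr⟩ := descent B hAlt.isRefl huv hvv W' hW'iso
      exact ⟨W, hiso, by omega⟩

end Bilin2

section Bilin3

universe u
variable {K : Type*} [Field K] {V : Type u} [AddCommGroup V] [Module K V]

lemma two_ne_zero_of_odd_card [Fintype K] (h : Fintype.card K % 2 = 1) : (2 : K) ≠ 0 := by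
  intro h2
  have hr : ringChar K ∣ 2 := (CharP.cast_eq_zero_iff K (ringChar K) 2).mp (by exact_mod_cast h2)
  have hr0 : ringChar K ≠ 0 := CharP.char_ne_zero_of_finite K (ringChar K)
  have hr1 : ringChar K ≠ 1 := CharP.ringChar_ne_one
  have hr2 : ringChar K = 2 := by
    have hle := Nat.le_of_dvd (by norm_num) hr
    omega
  haveI : CharP K 2 := hr2 ▸ ringChar.charP K
  obtain ⟨n, hp, hcard⟩ := FiniteField.card K 2
  have : (2 : ℕ) ∣ Fintype.card K := hcard ▸ dvd_pow_self 2 n.ne_zero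
  omega

lemma exists_isotropic_vec [Fintype K] (hodd : Fintype.card K % 2 = 1)
    [FiniteDimensional K V] (B : LinearMap.BilinForm K V) (hsymm : B.IsSymm)
    (hnd : B.Nondegenerate) (h3 : 3 ≤ finrank K V) :
    ∃ v : V, v ≠ 0 ∧ B v v = 0 := by
  haveI : Invertible (2 : K) := invertibleOfNonzero (two_ne_zero_of_odd_card hodd)
  obtain ⟨b, hb⟩ := LinearMap.BilinForm.exists_orthogonal_basis (LinearMap.BilinForm.isSymm_iff.mp hsymm)
  set i0 : Fin (finrank K V) := ⟨0, by omega⟩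
  set i1 : Fin (finrank K V) := ⟨1, by omega⟩
  set i2 : Fin (finrank K V) := ⟨2, by omega⟩
  have h01 : i0 ≠ i1 := by simp [i0, i1, Fin.ext_iff]
  have h02 : i0 ≠ i2 := by simp [i0, i2, Fin.ext_iff]
  have h12 : i1 ≠ i2 := by simp [i1, i2, Fin.ext_iff]
  have ha : B (b i0) (b i0) ≠ 0 := LinearMap.BilinForm.iIsOrtho.not_isOrtho_basis_self_of_nondegenerate hb hnd i0
  have hc : B (b i1) (b i1) ≠ 0 := LinearMap.BilinForm.iIsOrtho.not_isOrtho_basis_self_of_nondegenerate hb hnd i1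
  set a := B (b i0) (b i0)
  set c := B (b i1) (b i1)
  set e := B (b i2) (b i2)
  have hf2 : (Polynomial.C a * Polynomial.X ^ 2).degree = 2 := by
    rw [Polynomial.degree_C_mul_X_pow _ ha]; norm_cast
  have hdc : (Polynomial.C c * Polynomial.X ^ 2).degree = 2 := by
    rw [Polynomial.degree_C_mul_X_pow _ hc]; norm_cast
  have hg2 : (Polynomial.C c * Polynomial.X ^ 2 + Polynomial.C e).degree = 2 := by
    rw [Polynomial.degree_add_eq_left_of_degree_lt, hdc]
    rw [hdc]
    exact lt_of_le_of_lt Polynomial.degree_C_le (by norm_num)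
  obtain ⟨x, y, hxy⟩ := FiniteField.exists_root_sum_quadratic hf2 hg2 hodd
  simp only [Polynomial.eval_add, Polynomial.eval_mul, Polynomial.eval_C,
    Polynomial.eval_pow, Polynomial.eval_X] at hxy
  refine ⟨x • b i0 + y • b i1 + b i2, ?_, ?_⟩
  · intro h0
    have hrepr := congrArg (fun z => b.repr z i2) h0
    simp [Basis.repr_self, Finsupp.single_apply, h02, h12, Ne.symm h02, Ne.symm h12] at hrepr
  · have e01 : B (b i0) (b i1) = 0 := hb h01
    have e02 : B (b i0) (b i2) = 0 := hb h02
    have e12 : B (b i1) (b i2) = 0 := hb h12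
    have e10 : B (b i1) (b i0) = 0 := hb (Ne.symm h01)
    have e20 : B (b i2) (b i0) = 0 := hb (Ne.symm h02)
    have e21 : B (b i2) (b i1) = 0 := hb (Ne.symm h12)
    simp only [map_add, map_smul, LinearMap.add_apply, LinearMap.smul_apply, smul_eq_mul,
      e01, e02, e12, e10, e20, e21, mul_zero, add_zero, zero_add]
    rw [← hxy]
    ring

/-- Greedy construction of a large totally isotropic subspace over an odd finite field. -/
lemma exists_isotropic_odd [Fintype K] (hodd : Fintype.card K % 2 = 1) (d : ℕ) :
    ∀ (V : Type u) [AddCommGroup V] [Module K V] [FiniteDimensional K V]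
      (B : LinearMap.BilinForm K V), B.IsSymm → B.Nondegenerate → Module.finrank K V ≤ d →
      ∃ W : Submodule K V, (∀ x ∈ W, ∀ y ∈ W, B x y = 0) ∧
        Module.finrank K V ≤ 2 * Module.finrank K W + 2 := by
  induction d with
  | zero =>
    intro V _ _ _ B _ _ h0
    exact ⟨⊥, by simp, by omega⟩
  | succ d ih =>
    intro V _ _ _ B hsymm hnd hle
    by_cases hsmall : finrank K V ≤ 2
    · exact ⟨⊥, by simp, by omega⟩
    · obtain ⟨v, hv0, hvv⟩ := exists_isotropic_vec hodd B hsymm hnd (by omega)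
      have hex : ∃ u : V, B u v ≠ 0 := by
        by_contra hcon
        push_neg at hcon
        exact hv0 (hnd.1 v (fun n => by
          have := hcon n
          rw [← hsymm.eq v n] at this
          simpa using this))
      obtain ⟨u, huv⟩ := hex
      have hres := restrict_pair_nondeg B hsymm.isRefl huv hvv
      have hcompl := LinearMap.BilinForm.isCompl_orthogonal_of_restrict_nondegenerate
        hsymm.isRefl hres
      have hnd' := restrict_orthogonal_nondeg B hsymm.isRefl hnd hcompl
      have hsymm' : (B.restrict (B.orthogonal ((K ∙ u) ⊔ (K ∙ v)))).IsSymm :=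
        ⟨fun x y => hsymm.eq (x : V) (y : V)⟩
      have hfr : finrank K ((K ∙ u) ⊔ (K ∙ v) : Submodule K V) +
          finrank K (B.orthogonal ((K ∙ u) ⊔ (K ∙ v))) = finrank K V :=
        Submodule.finrank_add_eq_of_isCompl hcompl
      obtain ⟨hP1, hP2⟩ := pair_finranks huv
      obtain ⟨W', hW'iso, hW'fr⟩ := ih ↥(B.orthogonal ((K ∙ u) ⊔ (K ∙ v)))
        (B.restrict (B.orthogonal ((K ∙ u) ⊔ (K ∙ v)))) hsymm' hnd' (by omega)
      obtain ⟨W, hiso, hWfr⟩ := descent B hsymm.isRefl huv hvv W' hW'iso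
      exact ⟨W, hiso, by omega⟩

/-- If `W` is totally isotropic of dimension `(n-1)/2` in an `n`-dimensional space
(`n` odd), there is an anisotropic vector orthogonal to `W`. -/
lemma plus_one [FiniteDimensional K V] (B : LinearMap.BilinForm K V)
    (hsymm : B.IsSymm) (hnd : B.Nondegenerate)
    (W : Submodule K V) (hiso : ∀ x ∈ W, ∀ y ∈ W, B x y = 0)
    (hfr : finrank K V = 2 * finrank K W + 1) :
    ∃ v : V, B v v ≠ 0 ∧ ∀ w ∈ W, B v w = 0 := by
  have hWO : W ≤ B.orthogonal W := fun x hx n hn => hiso n hn x hx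
  have hfrW : finrank K W ≤ finrank K V := Submodule.finrank_le W
  have hfrO : finrank K (B.orthogonal W) = finrank K V - finrank K W :=
    LinearMap.BilinForm.finrank_orthogonal hnd W
  by_contra hcon
  push_neg at hcon
  have hOiso : ∀ v ∈ B.orthogonal W, B v v = 0 := by
    intro v hv
    by_contra hvv
    obtain ⟨w, hw, hvw⟩ := hcon v hvv
    exact hvw (hsymm.isRefl w v (mem_orth hv hw))
  have hOO : ∀ x ∈ B.orthogonal W, ∀ y ∈ B.orthogonal W, B x y = 0 := by
    intro x hx y hy
    by_cases hxW : x ∈ W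
    · exact mem_orth hy hxW
    · have hx0 : x ≠ 0 := fun h => hxW (h ▸ W.zero_mem)
      have hXO : W ⊔ (K ∙ x) ≤ B.orthogonal W := sup_le hWO
        ((Submodule.span_singleton_le_iff_mem x _).mpr hx)
      have hdisj : Disjoint W (K ∙ x) :=
        (Submodule.disjoint_span_singleton' hx0).mpr hxW
      have hfrX : finrank K (W ⊔ (K ∙ x) : Submodule K V) = finrank K W + 1 := by
        have h1 := Submodule.finrank_sup_add_finrank_inf_eq W (K ∙ x)
        rw [hdisj.eq_bot, finrank_bot, add_zero, finrank_span_singleton hx0] at h1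
        omega
      have hXeq : W ⊔ (K ∙ x) = B.orthogonal W :=
        Submodule.eq_of_le_of_finrank_le hXO (by omega)
      rw [← hXeq] at hy
      obtain ⟨w, hw, z, hz, rfl⟩ := Submodule.mem_sup.mp hy
      obtain ⟨cz, rfl⟩ := Submodule.mem_span_singleton.mp hz
      have e1 : B x w = 0 := hsymm.isRefl w x (mem_orth hx hw)
      have e2 : B x x = 0 := hOiso x hx
      simp [map_add, map_smul, e1, e2]
  have hle2 : B.orthogonal W ≤ B.orthogonal (B.orthogonal W) :=
    fun x hx n hn => hOO n hn x hx
  have hfrOO : finrank K (B.orthogonal (B.orthogonal W)) =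
      finrank K V - finrank K (B.orthogonal W) :=
    LinearMap.BilinForm.finrank_orthogonal hnd _
  have hmono := Submodule.finrank_mono hle2
  omega

end Bilin3

/-- for `q > 2` or `n ≥ 6`, with `q` even or `n` odd, every `F_q`-subspace
`U ⊊ F_{q^n}` of dimension `n - 1` satisfies
`ω(G_U) = q^⌊n/2⌋ + n - 2⌊n/2⌋`. -/
theorem omega_hyperplane (q n : ℕ) (hq : IsPrimePow q) (hn : 2 ≤ n)
    (h : 2 < q ∨ 6 ≤ n) (hpar : Even q ∨ Odd n)
    (K F : Type*) [Field K] [Field F] [Algebra K F] [Fintype K] [Fintype F]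
    (hK : Fintype.card K = q) (hF : Fintype.card F = q ^ n)
    (U : Submodule K F) (hU : U ≠ ⊤) (hd : Module.finrank K U = n - 1) :
    (paleyGraph (U : Set F)).cliqueNum = q ^ (n / 2) + n - 2 * (n / 2) := by
  classical
  have hq2 : 2 ≤ q := hq.two_le
  have hfrF : finrank K F = n := by
    have hc : Fintype.card F = Fintype.card K ^ finrank K F := card_eq_pow_finrank (K := K)
    rw [hF, hK] at hc
    exact (Nat.pow_right_injective hq2 hc.symm)
  -- the linear functional cutting out U
  have hq1 : finrank K (F ⧸ U) = 1 := by
    have h2 := Submodule.finrank_quotient_add_finrank U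
    rw [hfrF, hd] at h2
    omega
  have hKfr : finrank K K = 1 := finrank_self K
  let e : (F ⧸ U) ≃ₗ[K] K := LinearEquiv.ofFinrankEq _ _ (by rw [hq1, hKfr])
  set φ : F →ₗ[K] K := e.toLinearMap ∘ₗ U.mkQ with hφdef
  have hker : LinearMap.ker φ = U := by
    rw [hφdef, LinearMap.ker_comp, LinearEquiv.ker, Submodule.comap_bot, Submodule.ker_mkQ]
  have hmemU : ∀ x : F, x ∈ U ↔ φ x = 0 := by
    intro x
    rw [← hker, LinearMap.mem_ker]
  have hφ0 : ∃ z : F, φ z ≠ 0 := by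
    by_contra hcon
    push_neg at hcon
    apply hU
    rw [← hker]
    exact eq_top_iff.mpr (fun x _ => hcon x)
  -- the bilinear form
  set B : LinearMap.BilinForm K F := LinearMap.mk₂ K (fun x y => φ (x * y))
    (fun m₁ m₂ nn => by simp only [add_mul, map_add])
    (fun c m nn => by simp only [smul_mul_assoc, map_smul])
    (fun m n₁ n₂ => by simp only [mul_add, map_add])
    (fun c m nn => by simp only [mul_smul_comm, map_smul]) with hBdef
  have hBapp : ∀ x y : F, B x y = φ (x * y) := fun x y => rfl
  have hsymm : B.IsSymm := by
    constructor
    intro x y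
    simp only [RingHom.id_apply, hBapp, mul_comm x y]
  have hnd : B.Nondegenerate := by
    refine (LinearMap.IsRefl.nondegenerate_iff_separatingLeft hsymm.isRefl).mpr ?_
    intro x hx
    by_contra hx0
    obtain ⟨z, hz⟩ := hφ0
    have := hx (x⁻¹ * z)
    rw [hBapp, mul_inv_cancel_left₀ hx0] at this
    exact hz this
  have hadj : ∀ a b : F, (paleyGraph (U : Set F)).Adj a b ↔ a ≠ b ∧ B a b = 0 := by
    intro a b
    constructor
    · rintro ⟨h1, h2⟩
      exact ⟨h1, (hmemU _).mp h2⟩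
    · rintro ⟨h1, h2⟩
      exact ⟨h1, (hmemU _).mpr h2⟩
  -- Upper bound for every clique
  have hub : ∀ s : Finset F, (paleyGraph (U : Set F)).IsClique ↑s →
      s.card ≤ q ^ (n / 2) + n - 2 * (n / 2) := by
    intro s hs
    have hB0 : ∀ a ∈ s, ∀ b ∈ s, a ≠ b → B a b = 0 := by
      intro a ha b hb hab
      exact ((hadj a b).mp (hs ha hb hab)).2
    set S0 : Finset F := s.filter (fun a => B a a = 0) with hS0def
    set A : Finset F := s.filter (fun a => ¬ B a a = 0) with hAdef
    have hcard : S0.card + A.card = s.card := Finset.card_filter_add_card_filter_not _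
    set W : Submodule K F := Submodule.span K (S0 : Set F) with hWdef
    have hgen : ∀ a ∈ S0, W ≤ LinearMap.ker (B.flip a) := by
      intro a ha
      rw [hWdef, Submodule.span_le]
      intro b hb
      rw [SetLike.mem_coe, LinearMap.mem_ker, LinearMap.BilinForm.flip_apply]
      obtain ⟨has, haa⟩ := Finset.mem_filter.mp ha
      obtain ⟨hbs, hbb⟩ := Finset.mem_filter.mp (Finset.mem_coe.mp hb)
      rcases eq_or_ne b a with rfl | hba
      · exact hbb
      · exact hB0 b hbs a has hba
    have hWiso : ∀ x ∈ W, ∀ y ∈ W, B x y = 0 := by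
      intro x hx y hy
      have hle : W ≤ LinearMap.ker (B.flip y) := by
        rw [hWdef, Submodule.span_le]
        intro a ha
        rw [SetLike.mem_coe, LinearMap.mem_ker, LinearMap.BilinForm.flip_apply]
        have := hgen a (Finset.mem_coe.mp ha) hy
        rw [LinearMap.mem_ker, LinearMap.BilinForm.flip_apply] at this
        exact hsymm.isRefl y a this
      have := hle hx
      rwa [LinearMap.mem_ker, LinearMap.BilinForm.flip_apply] at this
    have hA_orth : ∀ a ∈ A, a ∈ B.orthogonal W := by
      intro a ha
      simp only [hAdef, Finset.mem_filter] at ha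
      intro x hx
      have hle : W ≤ LinearMap.ker (B.flip a) := by
        rw [hWdef, Submodule.span_le]
        intro b hb
        rw [SetLike.mem_coe, LinearMap.mem_ker, LinearMap.BilinForm.flip_apply]
        obtain ⟨hbs, hbb⟩ := Finset.mem_filter.mp (Finset.mem_coe.mp hb)
        have hba : b ≠ a := fun hba => ha.2 (hba ▸ hbb)
        exact hB0 b hbs a ha.1 hba
      have := hle hx
      rwa [LinearMap.mem_ker, LinearMap.BilinForm.flip_apply] at this
    have hWO : W ≤ B.orthogonal W := fun x hx nn hnn => hWiso nn hnn x hx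
    have hfrO : finrank K (B.orthogonal W) = finrank K F - finrank K W :=
      LinearMap.BilinForm.finrank_orthogonal hnd W
    have hfrWle : finrank K W ≤ finrank K F := Submodule.finrank_le W
    have hmonoWO := Submodule.finrank_mono hWO
    have hk2 : finrank K W + finrank K W ≤ n := by omega
    -- |S0| ≤ q ^ dim W
    have hS0card : S0.card ≤ q ^ finrank K W := by
      have hsub : ∀ a ∈ S0, a ∈ W := fun a ha => Submodule.subset_span ha
      have hinj : S0.card ≤ Fintype.card ↥W := by
        apply Finset.card_le_card_of_injOn (fun a => if h : a ∈ W then (⟨a, h⟩ : ↥W) else 0)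
          (fun a _ => Finset.mem_univ _)
        intro a ha b hb hab
        simp only [dif_pos (hsub a (Finset.mem_coe.mp ha)),
          dif_pos (hsub b (Finset.mem_coe.mp hb))] at hab
        exact congrArg Subtype.val hab
      have hcw : Fintype.card ↥W = q ^ finrank K W := by
        rw [card_eq_pow_finrank (K := K), hK]
      omega
    -- |A| ≤ n - 2 dim W
    have hkey : ∀ A' : Finset F, A' ⊆ A →
        finrank K W + A'.card ≤ finrank K ↥(W ⊔ Submodule.span K (A' : Set F)) := by
      intro A'
      induction A' using Finset.induction_on with
      | empty =>
        intro _
        have hle : W ≤ W ⊔ Submodule.span K (((∅ : Finset F) : Set F)) := le_sup_left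
        simpa using Submodule.finrank_mono hle
      | @insert a A' ha ih =>
        intro hsub
        have hsub' : A' ⊆ A := fun x hx => hsub (Finset.mem_insert_of_mem hx)
        have haA : a ∈ A := hsub (Finset.mem_insert_self a A')
        have haf : a ∈ s ∧ ¬ B a a = 0 := by
          simpa only [hAdef, Finset.mem_filter] using haA
        have hanotin : a ∉ W ⊔ Submodule.span K (A' : Set F) := by
          intro hmem
          have hX : (W ⊔ Submodule.span K (A' : Set F)) ≤ LinearMap.ker (B.flip a) := by
            apply sup_le
            · intro x hx
              rw [LinearMap.mem_ker, LinearMap.BilinForm.flip_apply]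
              exact hA_orth a haA x hx
            · rw [Submodule.span_le]
              intro b hb
              rw [SetLike.mem_coe, LinearMap.mem_ker, LinearMap.BilinForm.flip_apply]
              have hbA : b ∈ A := hsub' hb
              have hbs : b ∈ s := by
                simp only [hAdef, Finset.mem_filter] at hbA
                exact hbA.1
              have hba : b ≠ a := fun hba => ha (hba ▸ hb)
              exact hB0 b hbs a haf.1 hba
          have := hX hmem
          rw [LinearMap.mem_ker, LinearMap.BilinForm.flip_apply] at this
          exact haf.2 this
        have ha0 : a ≠ 0 := by
          intro h0
          apply haf.2
          rw [h0]
          simp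
        have hdisj : Disjoint (W ⊔ Submodule.span K (A' : Set F)) (K ∙ a) :=
          (Submodule.disjoint_span_singleton' ha0).mpr hanotin
        have h1 := Submodule.finrank_sup_add_finrank_inf_eq
          (W ⊔ Submodule.span K (A' : Set F)) (K ∙ a)
        rw [hdisj.eq_bot, finrank_bot, add_zero, finrank_span_singleton ha0] at h1
        have hre : W ⊔ Submodule.span K ((insert a A' : Finset F) : Set F) =
            (W ⊔ Submodule.span K (A' : Set F)) ⊔ (K ∙ a) := by
          rw [Finset.coe_insert, Submodule.span_insert,
            sup_comm (K ∙ a) (Submodule.span K (A' : Set F)), ← sup_assoc]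
        rw [hre, Finset.card_insert_of_notMem ha]
        have := ih hsub'
        omega
    have hsupO : W ⊔ Submodule.span K (A : Set F) ≤ B.orthogonal W := by
      apply sup_le hWO
      rw [Submodule.span_le]
      intro a ha
      exact hA_orth a ha
    have hAcard : finrank K W + A.card ≤ finrank K (B.orthogonal W) :=
      le_trans (hkey A (le_refl _)) (Submodule.finrank_mono hsupO)
    have hscard : s.card ≤ q ^ finrank K W + (n - 2 * finrank K W) := by omega
    calc s.card ≤ q ^ finrank K W + (n - 2 * finrank K W) := hscard
      _ ≤ q ^ (n / 2) + n - 2 * (n / 2) :=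
        arith_main q n (finrank K W) hq2 (by omega) (by omega)
  -- Lower bound: construct a large clique
  have hlow : ∃ W : Submodule K F, (∀ x ∈ W, ∀ y ∈ W, B x y = 0) ∧
      n ≤ 2 * finrank K W + 1 := by
    by_cases hqe : Even q
    · -- characteristic 2
      haveI hchar2K : CharP K 2 := by
        have hfin : CharP K (ringChar K) := ringChar.charP K
        obtain ⟨m, hp, hc⟩ := FiniteField.card K (ringChar K)
        have h2q : (2 : ℕ) ∣ q := hqe.two_dvd
        have h2pow : (2 : ℕ) ∣ ringChar K ^ (m : ℕ) := by rw [← hc, hK]; exact h2q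
        have h2p : (2 : ℕ) ∣ ringChar K := Nat.Prime.dvd_of_dvd_pow Nat.prime_two h2pow
        have hpe : 2 = ringChar K := (Nat.prime_dvd_prime_iff_eq Nat.prime_two hp).mp h2p
        rw [hpe]
        exact hfin
      haveI hchar2F : CharP F 2 := charP_of_injective_ringHom (algebraMap K F).injective 2
      have h2F : (2 : F) = 0 := by
        have := CharP.cast_eq_zero F 2
        exact_mod_cast this
      have hexp : ∀ a b : F, (a + b) * (a + b) = a * a + b * b := by
        intro a b
        linear_combination (a * b) * h2F
      have hsqF : Function.Surjective (fun x : F => x * x) := by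
        rw [← Finite.injective_iff_surjective]
        intro x y hxy
        simp only at hxy
        rcases mul_self_eq_mul_self_iff.mp hxy with h' | h'
        · exact h'
        · rwa [CharTwo.neg_eq] at h'
      have hsqK : Function.Surjective (fun c : K => c * c) := by
        rw [← Finite.injective_iff_surjective]
        intro x y hxy
        simp only at hxy
        rcases mul_self_eq_mul_self_iff.mp hxy with h' | h'
        · exact h'
        · rwa [CharTwo.neg_eq] at h'
      obtain ⟨z, hz⟩ := hφ0
      obtain ⟨x0, hx0⟩ := hsqF z
      simp only at hx0
      have hx0ne : x0 ≠ 0 := by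
        rintro rfl
        apply hz
        rw [← hx0]
        simp
      let H : Submodule K F :=
        { carrier := {x : F | φ (x * x) = 0}
          add_mem' := by
            intro a b ha hb
            simp only [Set.mem_setOf_eq] at *
            rw [hexp, map_add, ha, hb, add_zero]
          zero_mem' := by simp
          smul_mem' := by
            intro c x hx
            simp only [Set.mem_setOf_eq] at *
            rw [smul_mul_smul_comm, map_smul, hx, smul_zero] }
      have hmemH : ∀ x : F, x ∈ H ↔ φ (x * x) = 0 := fun x => Iff.rfl
      have hx0H : x0 ∉ H := by rw [hmemH, hx0]; exact hz
      have htop : H ⊔ (K ∙ x0) = ⊤ := by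
        rw [eq_top_iff]
        intro y _
        obtain ⟨c, hc⟩ := hsqK (φ (y * y) * (φ z)⁻¹)
        simp only at hc
        have hyH : y - c • x0 ∈ H := by
          rw [hmemH, CharTwo.sub_eq_add, hexp, map_add, smul_mul_smul_comm, hx0, map_smul,
            smul_eq_mul, hc, mul_assoc, inv_mul_cancel₀ hz, mul_one]
          exact CharTwo.add_self_eq_zero _
        have hy : y = (y - c • x0) + c • x0 := by ring
        rw [hy]
        exact Submodule.add_mem _ (Submodule.mem_sup_left hyH)
          (Submodule.mem_sup_right (Submodule.smul_mem _ c (Submodule.mem_span_singleton_self x0)))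
      have hfrH : n ≤ finrank K H + 1 := by
        have h1 := Submodule.finrank_sup_add_finrank_inf_eq H (K ∙ x0)
        rw [htop, finrank_top, finrank_span_singleton hx0ne, hfrF] at h1
        omega
      have halt : (B.restrict H).IsAlt := fun x => x.2
      obtain ⟨W', hW'iso, hW'fr⟩ := exists_isotropic_alt (K := K) (finrank K ↥H) ↥H
        (B.restrict H) halt le_rfl
      refine ⟨Submodule.map H.subtype W', ?_, ?_⟩
      · intro x hx y hy
        obtain ⟨x', hx', rfl⟩ := Submodule.mem_map.mp hx
        obtain ⟨y', hy', rfl⟩ := Submodule.mem_map.mp hy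
        exact hW'iso x' hx' y' hy'
      · rw [Submodule.finrank_map_subtype_eq]
        omega
    · -- odd characteristic, `n` odd
      have hqodd : q % 2 = 1 := Nat.odd_iff.mp (Nat.not_even_iff_odd.mp hqe)
      have hnodd : Odd n := hpar.resolve_left hqe
      have hcardodd : Fintype.card K % 2 = 1 := by rw [hK]; exact hqodd
      obtain ⟨W, hiso, hfr⟩ := exists_isotropic_odd hcardodd (finrank K F) F B hsymm hnd le_rfl
      refine ⟨W, hiso, ?_⟩
      have hodd1 := Nat.odd_iff.mp hnodd
      omega
  obtain ⟨W, hWiso, hWlb⟩ := hlow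
  have hWO : W ≤ B.orthogonal W := fun x hx nn hnn => hWiso nn hnn x hx
  have hfrO : finrank K ↥(B.orthogonal W) = finrank K F - finrank K ↥W :=
    LinearMap.BilinForm.finrank_orthogonal hnd W
  have hfrWle := Submodule.finrank_le W
  have hmono := Submodule.finrank_mono hWO
  have hk2 : 2 * finrank K W ≤ n := by omega
  -- the clique given by W
  let t0 : Finset F := Finset.univ.filter (fun x => x ∈ W)
  have ht0mem : ∀ x : F, x ∈ t0 ↔ x ∈ W := by
    intro x
    simp [t0]
  have ht0card : t0.card = q ^ finrank K W := by
    have h1 : Fintype.card ↥W = q ^ finrank K W := by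
      rw [card_eq_pow_finrank (K := K), hK]
    rw [← h1, Fintype.card_subtype]
  have ht0clique : (paleyGraph (U : Set F)).IsClique ↑t0 := by
    intro x hx y hy hxy
    rw [hadj]
    exact ⟨hxy, hWiso x ((ht0mem x).mp (Finset.mem_coe.mp hx)) y
      ((ht0mem y).mp (Finset.mem_coe.mp hy))⟩
  have hlb : ∃ t : Finset F, (paleyGraph (U : Set F)).IsClique ↑t ∧
      t.card = q ^ (n / 2) + n - 2 * (n / 2) := by
    rcases Nat.even_or_odd n with hne | hno
    · have hne' := Nat.even_iff.mp hne
      have hfW : finrank K W = n / 2 := by omega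
      rw [hfW] at ht0card
      exact ⟨t0, ht0clique, by omega⟩
    · have hno' := Nat.odd_iff.mp hno
      have hfrF2 : finrank K F = 2 * finrank K W + 1 := by omega
      obtain ⟨v, hvv, hvw⟩ := plus_one B hsymm hnd W hWiso hfrF2
      have hvt0 : v ∉ t0 := fun hm =>
        hvv (hWiso v ((ht0mem v).mp hm) v ((ht0mem v).mp hm))
      refine ⟨insert v t0, ?_, ?_⟩
      · rw [Finset.coe_insert]
        apply ht0clique.insert
        intro b hb hbv
        rw [hadj]
        exact ⟨hbv, hvw b ((ht0mem b).mp (Finset.mem_coe.mp hb))⟩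
      · rw [Finset.card_insert_of_notMem hvt0, ht0card]
        have hfW : finrank K W = n / 2 := by omega
        rw [hfW]
        omega
  -- conclusion
  obtain ⟨t, htc, htcard⟩ := hlb
  obtain ⟨s, hs⟩ := (paleyGraph (U : Set F)).exists_isNClique_cliqueNum
  have h1 := hub s hs.isClique
  have h2 : t.card ≤ (paleyGraph (U : Set F)).cliqueNum :=
    SimpleGraph.IsClique.card_le_cliqueNum (tc := htc)
  have h3 := hs.card_eq
  omega
end
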